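/- arXiv:2206.12308 — 5 statements merged into one kernel-verified Lean document; each statement's English description precedes it below -/
import Mathlib

section
/- If (q,t) ∈ Λ_f with 0 ≤ t < f(q) and π(q,t) = z with z ∈ V, then t = 0 and q = Q(z). -/
open Set Topology
open Filter

/-- A topological flow. -/
structure IsFlow (X : Type*) [TopologicalSpace X] (φ : ℝ → X → X) : Prop where
  cont : Continuous fun p : X × ℝ => φ p.2 p.1
  map_zero : ∀ x : X, φ 0 x = x
  map_add : ∀ s t : ℝ, ∀ x : X, φ (s + t) x = φ s (φ t x)

variable {X : Type*}

/-- `Φ_L(A) = {Φ_t(x) : t ∈ L, x ∈ A}`. -/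
def flowSet (φ : ℝ → X → X) (L : Set ℝ) (A : Set X) : Set X :=
  {y | ∃ t ∈ L, ∃ x ∈ A, φ t x = y}

/-- A cross-section of injectivity time `η > 0`. -/
def IsCrossSection (φ : ℝ → X → X) (η : ℝ) (S : Set X) : Prop :=
  0 < η ∧ Set.InjOn (fun p : X × ℝ => φ p.2 p.1) (S ×ˢ Set.Icc (-η) η)

/-- The flow interior (taking `γ = η/2`). -/
def flowInterior [TopologicalSpace X] (φ : ℝ → X → X) (η : ℝ) (U : Set X) : Set X :=
  interior (flowSet φ (Set.Icc (-(η / 2)) (η / 2)) U) ∩ U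

/-- The flow boundary. -/
def flowBoundary [TopologicalSpace X] (φ : ℝ → X → X) (η : ℝ) (U : Set X) : Set X :=
  closure U \ flowInterior φ η U

/-- `t` is a return-time sequence for `(x, q)`. -/
def IsRetSeq {N : ℕ} (φ : ℝ → X → X) (S : Fin N → Set X) (β α : ℝ)
    (x : X) (q : ℤ → Fin N) (t : ℤ → ℝ) : Prop :=
  t 0 = 0 ∧ (∀ i : ℤ, β ≤ t (i + 1) - t i ∧ t (i + 1) - t i ≤ α) ∧
    ∀ i : ℤ, φ (t i) x ∈ S (q i)

/-- The set `G ⋊ Σ^ℤ`. -/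
def GJoin {N : ℕ} (φ : ℝ → X → X) (S : Fin N → Set X) (β α : ℝ) :
    Set (X × (ℤ → Fin N)) :=
  {p | p.1 ∈ ⋃ i, S i ∧ ∃ t : ℤ → ℝ, IsRetSeq φ S β α p.1 p.2 t}

/-- First positive hitting time of `T` (`r₁` when `T = G`). -/
noncomputable def hitT (φ : ℝ → X → X) (T : Set X) (x : X) : ℝ :=
  sInf {t : ℝ | 0 < t ∧ φ t x ∈ T}

/-- Last negative hitting time of `T`. -/
noncomputable def hitTNeg (φ : ℝ → X → X) (T : Set X) (x : X) : ℝ :=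
  sSup {t : ℝ | t < 0 ∧ φ t x ∈ T}

/-- Forward return times: `r_0 = 0`, `r_{n+1}(x) = r_n(x) + r_1(Φ_{r_n(x)}(x))`. -/
noncomputable def retPos (φ : ℝ → X → X) (G : Set X) : ℕ → X → ℝ
  | 0 => fun _ => 0
  | n + 1 => fun x => retPos φ G n x + hitT φ G (φ (retPos φ G n x) x)

/-- Backward return times, defined analogously with negative hitting times. -/
noncomputable def retNeg (φ : ℝ → X → X) (G : Set X) : ℕ → X → ℝ
  | 0 => fun _ => 0
  | n + 1 => fun x => retNeg φ G n x + hitTNeg φ G (φ (retNeg φ G n x) x)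

/-- The `i`-th return time `r_i(x)`, `i ∈ ℤ`. -/
noncomputable def retZ (φ : ℝ → X → X) (G : Set X) (i : ℤ) (x : X) : ℝ :=
  if 0 ≤ i then retPos φ G i.toNat x else retNeg φ G (-i).toNat x

/-- `Z = ∪ᵢ ∂^Φ(Sᵢ)`. -/
def Zbd [TopologicalSpace X] {N : ℕ} (φ : ℝ → X → X) (S : Fin N → Set X) (η : ℝ) : Set X :=
  ⋃ i, flowBoundary φ η (S i)

/-- `W = X \ ∪_{r ∈ ℝ} Φ_r(Z)`. -/
def Wset [TopologicalSpace X] {N : ℕ} (φ : ℝ → X → X) (S : Fin N → Set X) (η : ℝ) : Set X :=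
  (⋃ r : ℝ, (fun z => φ r z) '' Zbd φ S η)ᶜ

/-- `V = W ∩ G`. -/
def Vset [TopologicalSpace X] {N : ℕ} (φ : ℝ → X → X) (S : Fin N → Set X) (η : ℝ) : Set X :=
  Wset φ S η ∩ ⋃ i, S i

/-- The itinerary map `Q : V → Σ^ℤ`, `Q_i(x) = j` iff `Φ_{r_i(x)}(x) ∈ S_j` (the sets `S_j`
being pairwise disjoint, such `j` is unique on `V`; junk value otherwise). -/
noncomputable def Qseq {N : ℕ} (φ : ℝ → X → X) (S : Fin N → Set X) (hN : 0 < N)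
    (x : X) : ℤ → Fin N := fun i =>
  @dite _ (∃ j : Fin N, φ (retZ φ (⋃ k, S k) i x) x ∈ S j) (Classical.dec _)
    (fun h => h.choose) (fun _ => ⟨0, hN⟩)

/-- `P : Λ → G` sends `q` to the unique `x` with `(x, q) ∈ G ⋊ Σ^ℤ`. -/
noncomputable def Pmap {N : ℕ} [Nonempty X] (φ : ℝ → X → X) (S : Fin N → Set X)
    (β α : ℝ) (q : ℤ → Fin N) : X :=
  @dite _ (∃ x : X, (x, q) ∈ GJoin φ S β α) (Classical.dec _)
    (fun h => h.choose) (fun _ => Classical.arbitrary X)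

/-- The roof function `f(q) = t₁` where `t` is the return-time sequence of `(P(q), q)`. -/
noncomputable def fmap {N : ℕ} [Nonempty X] (φ : ℝ → X → X) (S : Fin N → Set X)
    (β α : ℝ) (q : ℤ → Fin N) : ℝ :=
  @dite _ (∃ t : ℤ → ℝ, IsRetSeq φ S β α (Pmap φ S β α q) q t) (Classical.dec _)
    (fun h => h.choose 1) (fun _ => 0)

section Basic

variable [TopologicalSpace X] {φ : ℝ → X → X}

lemma IsFlow.comp (hφ : IsFlow X φ) (s t : ℝ) (x : X) : φ s (φ t x) = φ (s + t) x :=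
  (hφ.map_add s t x).symm

lemma IsFlow.cancel (hφ : IsFlow X φ) (t : ℝ) (x : X) : φ (-t) (φ t x) = x := by
  rw [hφ.comp, neg_add_cancel, hφ.map_zero]

lemma IsFlow.cont_x (hφ : IsFlow X φ) (t : ℝ) : Continuous fun y : X => φ t y :=
  hφ.cont.comp (continuous_id.prodMk continuous_const)

lemma IsFlow.cont_t (hφ : IsFlow X φ) (y : X) : Continuous fun t : ℝ => φ t y :=
  hφ.cont.comp (continuous_const.prodMk continuous_id)

end Basic

section Ctx

variable [MetricSpace X] [CompactSpace X] {N : ℕ}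
set_option linter.unusedSectionVars false
set_option linter.unusedVariables false

/-- Bundle of all standing hypotheses. -/
structure FCtx (φ : ℝ → X → X) (S : Fin N → Set X) (η β α : ℝ) : Prop where
  flow : IsFlow X φ
  closed : ∀ i, IsClosed (S i)
  disj : Pairwise (Function.onFun Disjoint S)
  cs : ∀ i, IsCrossSection φ η (S i)
  hβ : 0 < β
  hβα : β ≤ α
  hαη : α < η
  diam : ∀ i, Metric.diam (S i) ≤ α
  hexp : ∀ (t u : ℤ → ℝ) (x y : X), t 0 = 0 → u 0 = 0 →
      (∀ i : ℤ, 0 < t (i + 1) - t i ∧ t (i + 1) - t i ≤ α) →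
      (∀ i : ℤ, |u (i + 1) - u i| ≤ α) →
      Filter.Tendsto (fun n : ℕ => t (n : ℤ)) Filter.atTop Filter.atTop →
      Filter.Tendsto (fun n : ℕ => t (-(n : ℤ))) Filter.atTop Filter.atBot →
      (∀ i : ℤ, dist (φ (t i) x) (φ (u i) y) ≤ α) →
      ∃ s : ℝ, |s| ≤ η ∧ y = φ s x
  cov₁ : flowSet φ (Set.Icc 0 α) (⋃ i, S i) = Set.univ
  cov₂ : flowSet φ (Set.Icc (-α) 0) (⋃ i, S i) = Set.univ
  βdisj : Pairwise (Function.onFun Disjoint fun i => flowSet φ (Set.Icc 0 β) (S i))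

variable {φ : ℝ → X → X} {S : Fin N → Set X} {η β α : ℝ}

lemma FCtx.hη (C : FCtx φ S η β α) : 0 < η := lt_trans (lt_of_lt_of_le C.hβ C.hβα) C.hαη

lemma FCtx.G_closed (C : FCtx φ S η β α) : IsClosed (⋃ i, S i) :=
  isClosed_iUnion_of_finite C.closed

/-- Rigidity: two points of the same section on the same small orbit segment coincide. -/
lemma FCtx.rigid (C : FCtx φ S η β α) {k : Fin N} {p p' : X} (hp : p ∈ S k) (hp' : p' ∈ S k)
    {d : ℝ} (hd : |d| ≤ η) (h : φ d p = p') : d = 0 ∧ p = p' := by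
  have habs := abs_le.mp hd
  have key := (C.cs k).2 (show (p, d) ∈ (S k) ×ˢ Set.Icc (-η) η from ⟨hp, habs.1, habs.2⟩)
    (show (p', (0:ℝ)) ∈ (S k) ×ˢ Set.Icc (-η) η from ⟨hp', neg_nonpos.mpr C.hη.le, C.hη.le⟩)
    (by simpa [C.flow.map_zero] using h)
  have h1 : p = p' := congrArg Prod.fst key
  have h2 : d = 0 := congrArg Prod.snd key
  exact ⟨h2, h1⟩

/-- Hits of the flow on `G` are `β`-separated. -/
lemma FCtx.sep (C : FCtx φ S η β α) {y : X} {s s' : ℝ}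
    (hs : φ s y ∈ ⋃ i, S i) (hs' : φ s' y ∈ ⋃ i, S i) (h : |s' - s| ≤ β) : s' = s := by
  -- reduce to ordered case
  wlog hle : s ≤ s' generalizing s s'
  · exact (this hs' hs (by rw [abs_sub_comm] at h; exact h) (le_of_not_ge hle)).symm
  obtain ⟨k, hk⟩ := mem_iUnion.mp hs
  obtain ⟨l, hl⟩ := mem_iUnion.mp hs'
  have hd : 0 ≤ s' - s := by linarith
  have hdβ : s' - s ≤ β := by have := abs_le.mp h; linarith
  have hmem1 : φ s' y ∈ flowSet φ (Set.Icc 0 β) (S k) := by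
    refine ⟨s' - s, ⟨hd, hdβ⟩, φ s y, hk, ?_⟩
    rw [C.flow.comp]; ring_nf
  have hmem2 : φ s' y ∈ flowSet φ (Set.Icc 0 β) (S l) := by
    exact ⟨0, ⟨le_refl 0, C.hβ.le⟩, φ s' y, hl, C.flow.map_zero _⟩
  have hkl : k = l := by
    by_contra hne
    exact (C.βdisj hne).le_bot ⟨hmem1, hmem2⟩
  subst hkl
  have := C.rigid hk hl (d := s' - s)
    (by rw [abs_of_nonneg hd]; linarith [C.hβα, C.hαη]) (by rw [C.flow.comp]; ring_nf)
  linarith [this.1]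

/-- Forward hit within time `α` after any positive delay. -/
lemma FCtx.hit_fwd (C : FCtx φ S η β α) (y : X) {ε : ℝ} (hε : 0 < ε) :
    ∃ s, ε ≤ s ∧ s ≤ ε + α ∧ φ s y ∈ ⋃ i, S i := by
  have h : φ ε y ∈ flowSet φ (Set.Icc (-α) 0) (⋃ i, S i) := by rw [C.cov₂]; trivial
  obtain ⟨u, ⟨hu1, hu2⟩, g, hg, hgu⟩ := h
  refine ⟨ε - u, by linarith, by linarith, ?_⟩
  have h1 : φ (ε - u) y = φ (-u) (φ ε y) := by rw [C.flow.comp]; ring_nf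
  rw [h1, ← hgu, C.flow.cancel]; exact hg

/-- Backward hit within time `α` before any negative delay. -/
lemma FCtx.hit_bwd (C : FCtx φ S η β α) (y : X) {ε : ℝ} (hε : 0 < ε) :
    ∃ s, -(ε + α) ≤ s ∧ s ≤ -ε ∧ φ s y ∈ ⋃ i, S i := by
  have h : φ (-ε) y ∈ flowSet φ (Set.Icc 0 α) (⋃ i, S i) := by rw [C.cov₁]; trivial
  obtain ⟨u, ⟨hu1, hu2⟩, g, hg, hgu⟩ := h
  refine ⟨-ε - u, by linarith, by linarith, ?_⟩
  have h1 : φ (-ε - u) y = φ (-u) (φ (-ε) y) := by rw [C.flow.comp]; ring_nf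
  rw [h1, ← hgu, C.flow.cancel]; exact hg

end Ctx

section Ret
variable [MetricSpace X] [CompactSpace X] {N : ℕ}
set_option linter.unusedSectionVars false
variable {φ : ℝ → X → X} {S : Fin N → Set X} {η β α : ℝ}

/-- Properties of the first positive hitting time of `G` for points of `G`. -/
lemma FCtx.hitT_spec (C : FCtx φ S η β α) {y : X} (hy : y ∈ ⋃ i, S i) :
    β < hitT φ (⋃ i, S i) y ∧ hitT φ (⋃ i, S i) y ≤ α ∧
      φ (hitT φ (⋃ i, S i) y) y ∈ ⋃ i, S i ∧
      ∀ s, 0 < s → s < hitT φ (⋃ i, S i) y → φ s y ∉ ⋃ i, S i := by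
  have hy0 : φ 0 y ∈ ⋃ i, S i := by rw [C.flow.map_zero]; exact hy
  -- any positive hit exceeds β
  have hgt : ∀ s, 0 < s → φ s y ∈ ⋃ i, S i → β < s := by
    intro s hs hmem
    by_contra hle
    push_neg at hle
    have := C.sep hy0 hmem (by rw [sub_zero, abs_of_pos hs]; exact hle)
    linarith
  -- the compact set of candidate hits
  set K : Set ℝ := Set.Icc β (2 * α) ∩ {s | φ s y ∈ ⋃ i, S i} with hK
  have hKclosed : IsClosed K := isClosed_Icc.inter (C.G_closed.preimage (C.flow.cont_t y))
  have hKcompact : IsCompact K := isCompact_Icc.of_isClosed_subset hKclosed inter_subset_left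
  have hβα2 : β ≤ 2 * α := by linarith [C.hβα, C.hβ]
  have hKne : K.Nonempty := by
    obtain ⟨s, hs1, hs2, hs3⟩ := C.hit_fwd y (half_pos C.hβ)
    have hβs : β < s := hgt s (by linarith [C.hβ]) hs3
    exact ⟨s, ⟨hβs.le, by linarith [C.hβα]⟩, hs3⟩
  obtain ⟨s₀, hs₀K, hs₀min⟩ := hKcompact.exists_isLeast hKne
  have hs₀β : β < s₀ := hgt s₀ (by linarith [hs₀K.1.1, C.hβ]) hs₀K.2
  -- minimality over all positive hits
  have hmin : ∀ s, 0 < s → s < s₀ → φ s y ∉ ⋃ i, S i := by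
    intro s hs hss₀ hmem
    have hβs : β < s := hgt s hs hmem
    have : s ∈ K := ⟨⟨hβs.le, by linarith [hs₀K.1.2]⟩, hmem⟩
    exact absurd (hs₀min this) (by linarith)
  -- s₀ ≤ α
  have hs₀α : s₀ ≤ α := by
    refine le_of_forall_pos_le_add fun ε hε => ?_
    obtain ⟨s, hs1, hs2, hs3⟩ := C.hit_fwd y (lt_min hε (half_pos C.hβ))
    have hβs : β < s := hgt s (lt_of_lt_of_le (lt_min hε (half_pos C.hβ)) hs1) hs3
    have hsK : s ∈ K := ⟨⟨hβs.le, by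
      have := min_le_right ε (β/2); nlinarith [C.hβα, C.hβ]⟩, hs3⟩
    have := hs₀min hsK
    have := min_le_left ε (β/2)
    linarith
  -- identify hitT with s₀
  have hhitT : hitT φ (⋃ i, S i) y = s₀ := by
    unfold hitT
    apply le_antisymm
    · exact csInf_le ⟨0, fun t ht => ht.1.le⟩ ⟨by linarith [C.hβ], hs₀K.2⟩
    · refine le_csInf ⟨s₀, by linarith [C.hβ], hs₀K.2⟩ fun t ht => ?_
      by_contra hlt
      push_neg at hlt
      exact hmin t ht.1 hlt ht.2
  rw [hhitT]
  exact ⟨hs₀β, hs₀α, hs₀K.2, hmin⟩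

/-- Properties of the last negative hitting time of `G` for points of `G`. -/
lemma FCtx.hitTNeg_spec (C : FCtx φ S η β α) {y : X} (hy : y ∈ ⋃ i, S i) :
    hitTNeg φ (⋃ i, S i) y < -β ∧ -α ≤ hitTNeg φ (⋃ i, S i) y ∧
      φ (hitTNeg φ (⋃ i, S i) y) y ∈ ⋃ i, S i ∧
      ∀ s, s < 0 → hitTNeg φ (⋃ i, S i) y < s → φ s y ∉ ⋃ i, S i := by
  have hy0 : φ 0 y ∈ ⋃ i, S i := by rw [C.flow.map_zero]; exact hy
  have hgt : ∀ s, s < 0 → φ s y ∈ ⋃ i, S i → s < -β := by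
    intro s hs hmem
    by_contra hle
    push_neg at hle
    have := C.sep hy0 hmem (by rw [sub_zero, abs_of_neg hs]; linarith)
    linarith
  set K : Set ℝ := Set.Icc (-(2 * α)) (-β) ∩ {s | φ s y ∈ ⋃ i, S i} with hK
  have hKclosed : IsClosed K := isClosed_Icc.inter (C.G_closed.preimage (C.flow.cont_t y))
  have hKcompact : IsCompact K := isCompact_Icc.of_isClosed_subset hKclosed inter_subset_left
  have hKne : K.Nonempty := by
    obtain ⟨s, hs1, hs2, hs3⟩ := C.hit_bwd y (half_pos C.hβ)
    have hβs : s < -β := hgt s (by linarith [C.hβ]) hs3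
    exact ⟨s, ⟨by linarith [C.hβα], hβs.le⟩, hs3⟩
  obtain ⟨s₀, hs₀K, hs₀max⟩ := hKcompact.exists_isGreatest hKne
  have hs₀β : s₀ < -β := hgt s₀ (by linarith [hs₀K.1.2, C.hβ]) hs₀K.2
  have hmin : ∀ s, s < 0 → s₀ < s → φ s y ∉ ⋃ i, S i := by
    intro s hs hss₀ hmem
    have hβs : s < -β := hgt s hs hmem
    have : s ∈ K := ⟨⟨by linarith [hs₀K.1.1], hβs.le⟩, hmem⟩
    exact absurd (hs₀max this) (by linarith)
  have hs₀α : -α ≤ s₀ := by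
    have key : ∀ ε, 0 < ε → -α - ε ≤ s₀ := by
      intro ε hε
      obtain ⟨s, hs1, hs2, hs3⟩ := C.hit_bwd y (lt_min hε (half_pos C.hβ))
      have hεm := lt_min hε (half_pos C.hβ)
      have hβs : s < -β := hgt s (by linarith) hs3
      have h2α : -(2 * α) ≤ s := by
        have := min_le_right ε (β/2); nlinarith [C.hβα, C.hβ]
      have hsK : s ∈ K := ⟨⟨h2α, hβs.le⟩, hs3⟩
      have := hs₀max hsK
      have := min_le_left ε (β/2)
      linarith
    by_contra hlt
    push_neg at hlt
    have := key ((-α - s₀)/2) (by linarith)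
    linarith
  have hhit : hitTNeg φ (⋃ i, S i) y = s₀ := by
    unfold hitTNeg
    apply le_antisymm
    · refine csSup_le ⟨s₀, by linarith [C.hβ], hs₀K.2⟩ fun t ht => ?_
      by_contra hlt
      push_neg at hlt
      exact hmin t ht.1 hlt ht.2
    · exact le_csSup ⟨0, fun t ht => ht.1.le⟩ ⟨by linarith [C.hβ], hs₀K.2⟩
  rw [hhit]
  exact ⟨hs₀β, hs₀α, hs₀K.2, hmin⟩

end Ret

section Seq
variable {β α : ℝ}

lemma seq_growth {ρ : ℤ → ℝ} (hgap : ∀ i : ℤ, β ≤ ρ (i + 1) - ρ i) :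
    ∀ i j : ℤ, i ≤ j → ρ i + ((j : ℝ) - (i : ℝ)) * β ≤ ρ j := by
  intro i j hij
  refine Int.le_induction (motive := fun j _ => ρ i + ((j : ℝ) - (i : ℝ)) * β ≤ ρ j) (by simp) ?_ j hij
  intro k hk ih
  have := hgap k
  push_cast
  push_cast at ih
  linarith

lemma seq_upper {ρ : ℤ → ℝ} (hgap : ∀ i : ℤ, ρ (i + 1) - ρ i ≤ α) :
    ∀ i j : ℤ, i ≤ j → ρ j ≤ ρ i + ((j : ℝ) - (i : ℝ)) * α := by
  intro i j hij
  refine Int.le_induction (motive := fun j _ => ρ j ≤ ρ i + ((j : ℝ) - (i : ℝ)) * α) (by simp) ?_ j hij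
  intro k hk ih
  have := hgap k
  push_cast
  push_cast at ih
  linarith

lemma seq_strictMono {ρ : ℤ → ℝ} (hβ : 0 < β) (hgap : ∀ i : ℤ, β ≤ ρ (i + 1) - ρ i) :
    StrictMono ρ := by
  intro i j hij
  have h1 := seq_growth hgap i j hij.le
  have h3 : i + 1 ≤ j := hij
  have h2 : ((i : ℝ)) + 1 ≤ (j : ℝ) := by exact_mod_cast h3
  nlinarith

lemma seq_abs_bound {ρ : ℤ → ℝ} (hα : 0 ≤ α) (h0 : ρ 0 = 0)
    (hgapl : ∀ i : ℤ, 0 ≤ ρ (i + 1) - ρ i) (hgap : ∀ i : ℤ, ρ (i + 1) - ρ i ≤ α) (i : ℤ) :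
    |ρ i| ≤ |(i : ℝ)| * α := by
  rcases le_or_gt 0 i with hi | hi
  · have h1 := seq_upper hgap 0 i hi
    have h2 := seq_growth hgapl 0 i hi
    rw [h0] at h1 h2
    have hi' : (0:ℝ) ≤ (i:ℝ) := by exact_mod_cast hi
    rw [abs_of_nonneg (by simpa using h2), abs_of_nonneg hi']
    simpa using h1
  · have h1 := seq_upper hgap i 0 hi.le
    have h2 := seq_growth hgapl i 0 hi.le
    rw [h0] at h1 h2
    push_cast at h1 h2
    have hi' : (i:ℝ) ≤ 0 := by exact_mod_cast hi.le
    rw [abs_of_nonpos (by nlinarith), abs_of_nonpos hi']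
    nlinarith

end Seq

section RetZ
variable [MetricSpace X] [CompactSpace X] {N : ℕ}
set_option linter.unusedSectionVars false
variable {φ : ℝ → X → X} {S : Fin N → Set X} {η β α : ℝ}

/-- `ρ` enumerates in order all the hitting times of `G` along the orbit of `y`. -/
def FullHits (φ : ℝ → X → X) (S : Fin N → Set X) (β α : ℝ) (y : X) (ρ : ℤ → ℝ) : Prop :=
  ρ 0 = 0 ∧ (∀ i : ℤ, β ≤ ρ (i + 1) - ρ i ∧ ρ (i + 1) - ρ i ≤ α) ∧
    (∀ i : ℤ, φ (ρ i) y ∈ ⋃ j, S j) ∧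
    ∀ s : ℝ, φ s y ∈ (⋃ j, S j) → ∃ i : ℤ, s = ρ i

lemma FCtx.retPos_spec (C : FCtx φ S η β α) {y : X} (hy : y ∈ ⋃ i, S i) :
    ∀ n : ℕ, φ (retPos φ (⋃ i, S i) n y) y ∈ ⋃ i, S i ∧
      (β < retPos φ (⋃ i, S i) (n + 1) y - retPos φ (⋃ i, S i) n y ∧
        retPos φ (⋃ i, S i) (n + 1) y - retPos φ (⋃ i, S i) n y ≤ α) ∧
      ∀ s, retPos φ (⋃ i, S i) n y < s → s < retPos φ (⋃ i, S i) (n + 1) y →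
        φ s y ∉ ⋃ i, S i := by
  have key : ∀ n : ℕ, φ (retPos φ (⋃ i, S i) n y) y ∈ ⋃ i, S i := by
    intro n
    induction n with
    | zero => simpa [retPos, C.flow.map_zero] using hy
    | succ n ih =>
      have hspec := C.hitT_spec ih
      show φ (retPos φ (⋃ i, S i) n y + hitT φ (⋃ i, S i) (φ (retPos φ (⋃ i, S i) n y) y)) y
        ∈ ⋃ i, S i
      rw [add_comm, ← C.flow.comp]
      exact hspec.2.2.1
  intro n
  have ih := key n
  have hspec := C.hitT_spec ih
  refine ⟨ih, ⟨by simpa [retPos] using hspec.1, by simpa [retPos] using hspec.2.1⟩, ?_⟩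
  intro s hs1 hs2 hmem
  have heq : φ s y = φ (s - retPos φ (⋃ i, S i) n y) (φ (retPos φ (⋃ i, S i) n y) y) := by
    rw [C.flow.comp]; ring_nf
  have h2 : s - retPos φ (⋃ i, S i) n y < hitT φ (⋃ i, S i) (φ (retPos φ (⋃ i, S i) n y) y) := by
    have : retPos φ (⋃ i, S i) (n+1) y =
      retPos φ (⋃ i, S i) n y + hitT φ (⋃ i, S i) (φ (retPos φ (⋃ i, S i) n y) y) := rfl
    linarith [hs2, this ▸ hs2]
  exact hspec.2.2.2 _ (by linarith) h2 (heq ▸ hmem)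

lemma FCtx.retNeg_spec (C : FCtx φ S η β α) {y : X} (hy : y ∈ ⋃ i, S i) :
    ∀ n : ℕ, φ (retNeg φ (⋃ i, S i) n y) y ∈ ⋃ i, S i ∧
      (β < retNeg φ (⋃ i, S i) n y - retNeg φ (⋃ i, S i) (n + 1) y ∧
        retNeg φ (⋃ i, S i) n y - retNeg φ (⋃ i, S i) (n + 1) y ≤ α) ∧
      ∀ s, retNeg φ (⋃ i, S i) (n + 1) y < s → s < retNeg φ (⋃ i, S i) n y →
        φ s y ∉ ⋃ i, S i := by
  have key : ∀ n : ℕ, φ (retNeg φ (⋃ i, S i) n y) y ∈ ⋃ i, S i := by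
    intro n
    induction n with
    | zero => simpa [retNeg, C.flow.map_zero] using hy
    | succ n ih =>
      have hspec := C.hitTNeg_spec ih
      show φ (retNeg φ (⋃ i, S i) n y + hitTNeg φ (⋃ i, S i) (φ (retNeg φ (⋃ i, S i) n y) y)) y
        ∈ ⋃ i, S i
      rw [add_comm, ← C.flow.comp]
      exact hspec.2.2.1
  intro n
  have ih := key n
  have hspec := C.hitTNeg_spec ih
  have hrec : retNeg φ (⋃ i, S i) (n+1) y =
      retNeg φ (⋃ i, S i) n y + hitTNeg φ (⋃ i, S i) (φ (retNeg φ (⋃ i, S i) n y) y) := rfl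
  refine ⟨ih, ⟨by rw [hrec]; linarith [hspec.1], by rw [hrec]; linarith [hspec.2.1]⟩, ?_⟩
  intro s hs1 hs2 hmem
  have heq : φ s y = φ (s - retNeg φ (⋃ i, S i) n y) (φ (retNeg φ (⋃ i, S i) n y) y) := by
    rw [C.flow.comp]; ring_nf
  exact hspec.2.2.2 _ (by linarith) (by rw [hrec] at hs1; linarith) (heq ▸ hmem)

lemma retZ_natCast (φ : ℝ → X → X) (G : Set X) (n : ℕ) (y : X) :
    retZ φ G (n : ℤ) y = retPos φ G n y := by
  unfold retZ
  rw [if_pos (Int.natCast_nonneg n), Int.toNat_natCast]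

lemma retZ_negCast (φ : ℝ → X → X) (G : Set X) (n : ℕ) (y : X) :
    retZ φ G (-(n : ℤ)) y = retNeg φ G n y := by
  unfold retZ
  rcases Nat.eq_zero_or_pos n with h | h
  · subst h; simp [retPos, retNeg]
  · rw [if_neg (by omega), neg_neg, Int.toNat_natCast]

/-- The canonical return-time sequence of a point of `G` enumerates all hits. -/
lemma FCtx.fullHits_retZ (C : FCtx φ S η β α) {y : X} (hy : y ∈ ⋃ i, S i) :
    FullHits φ S β α y (fun i => retZ φ (⋃ j, S j) i y) := by
  have hpos := C.retPos_spec hy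
  have hneg := C.retNeg_spec hy
  -- gaps and no-hit-between, for each integer index
  have hgap : ∀ i : ℤ, (β < retZ φ (⋃ j, S j) (i+1) y - retZ φ (⋃ j, S j) i y ∧
      retZ φ (⋃ j, S j) (i+1) y - retZ φ (⋃ j, S j) i y ≤ α) ∧
      ∀ s, retZ φ (⋃ j, S j) i y < s → s < retZ φ (⋃ j, S j) (i+1) y → φ s y ∉ ⋃ j, S j := by
    intro i
    rcases le_or_gt 0 i with hi | hi
    · obtain ⟨n, rfl⟩ := Int.eq_ofNat_of_zero_le hi
      have h1 : ((n : ℤ) + 1) = ((n + 1 : ℕ) : ℤ) := by push_cast; ring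
      rw [h1, retZ_natCast, retZ_natCast]
      exact ⟨(hpos n).2.1, (hpos n).2.2⟩
    · obtain ⟨n, hn⟩ : ∃ n : ℕ, i = -((n + 1 : ℕ) : ℤ) := ⟨(-(i+1)).toNat, by omega⟩
      subst hn
      have h1 : (-((n + 1 : ℕ) : ℤ) + 1) = -((n : ℕ) : ℤ) := by push_cast; ring
      rw [h1, retZ_negCast, retZ_negCast]
      exact ⟨⟨(hneg n).2.1.1, (hneg n).2.1.2⟩, (hneg n).2.2⟩
  have hmem : ∀ i : ℤ, φ (retZ φ (⋃ j, S j) i y) y ∈ ⋃ j, S j := by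
    intro i
    rcases le_or_gt 0 i with hi | hi
    · obtain ⟨n, rfl⟩ := Int.eq_ofNat_of_zero_le hi
      rw [retZ_natCast]; exact (hpos n).1
    · obtain ⟨n, hn⟩ : ∃ n : ℕ, i = -((n : ℕ) : ℤ) := ⟨(-i).toNat, by omega⟩
      subst hn
      rw [retZ_negCast]; exact (hneg n).1
  have h0 : retZ φ (⋃ j, S j) 0 y = 0 := by
    have := retZ_natCast φ (⋃ j, S j) 0 y
    simpa [retPos] using this
  refine ⟨h0, fun i => ⟨(hgap i).1.1.le, (hgap i).1.2⟩, hmem, ?_⟩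
  -- all hits are recorded
  intro s hs
  set ρ : ℤ → ℝ := fun i => retZ φ (⋃ j, S j) i y with hρ
  have h0' : ρ 0 = 0 := h0
  have hgapβ : ∀ i : ℤ, β ≤ ρ (i + 1) - ρ i := fun i => (hgap i).1.1.le
  have hmono := seq_growth hgapβ
  have hbddA : ∃ b : ℤ, ∀ i : ℤ, ρ i ≤ s → i ≤ b := by
    obtain ⟨m, hm⟩ := exists_nat_ge ((s + 1) / β)
    refine ⟨m, fun i hi => ?_⟩
    by_contra hgt
    push_neg at hgt
    have h1 := hmono 0 i (by omega)
    rw [h0'] at h1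
    have h2 : (m : ℝ) ≤ (i : ℝ) := by exact_mod_cast le_of_lt (by exact_mod_cast hgt)
    have h3 : (m : ℝ) * β ≤ (i : ℝ) * β := by nlinarith [C.hβ]
    rw [div_le_iff₀ C.hβ] at hm
    simp only [Int.cast_zero, sub_zero, zero_add] at h1
    linarith
  have hne : ∃ i : ℤ, ρ i ≤ s := by
    obtain ⟨m, hm⟩ := exists_nat_ge ((-s) / β)
    refine ⟨-(m : ℤ), ?_⟩
    have h1 := hmono (-(m : ℤ)) 0 (by omega)
    rw [h0'] at h1
    rw [div_le_iff₀ C.hβ] at hm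
    push_cast at h1
    linarith
  obtain ⟨i₀, hi₀, hi₀max⟩ := Int.exists_greatest_of_bdd hbddA hne
  have hlt : s < ρ (i₀ + 1) := by
    by_contra hge
    push_neg at hge
    exact absurd (hi₀max (i₀ + 1) hge) (by omega)
  rcases eq_or_lt_of_le hi₀ with heq | hlt'
  · exact ⟨i₀, heq.symm⟩
  · exact absurd hs ((hgap i₀).2 s hlt' hlt)

end RetZ

section Uniq
variable [MetricSpace X] [CompactSpace X] {N : ℕ}
set_option linter.unusedSectionVars false
variable {φ : ℝ → X → X} {S : Fin N → Set X} {η β α : ℝ}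

/-- A return-time sequence tends to `±∞`. -/
lemma FCtx.retseq_tendsto (C : FCtx φ S η β α) {ρ : ℤ → ℝ} (h0 : ρ 0 = 0)
    (hgap : ∀ i : ℤ, β ≤ ρ (i + 1) - ρ i) :
    Filter.Tendsto (fun n : ℕ => ρ (n : ℤ)) Filter.atTop Filter.atTop ∧
      Filter.Tendsto (fun n : ℕ => ρ (-(n : ℤ))) Filter.atTop Filter.atBot := by
  have hβ' : (0:ℝ) < β := C.hβ
  constructor
  · refine tendsto_atTop_mono (f := fun n : ℕ => (n : ℝ) * β) ?_ ?_
    · intro n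
      show (n : ℝ) * β ≤ ρ (n : ℤ)
      have := seq_growth hgap 0 n (Int.natCast_nonneg n)
      rw [h0] at this
      push_cast at this
      linarith
    · exact Tendsto.atTop_mul_const hβ' tendsto_natCast_atTop_atTop
  · refine tendsto_atBot_mono (f := fun n : ℕ => -((n : ℝ) * β)) ?_ ?_
    · intro n
      show ρ (-(n : ℤ)) ≤ -((n : ℝ) * β)
      have := seq_growth hgap (-(n:ℤ)) 0 (by omega)
      rw [h0] at this
      push_cast at this
      linarith
    · exact tendsto_neg_atTop_atBot.comp (Tendsto.atTop_mul_const hβ' tendsto_natCast_atTop_atTop)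

/-- There is at most one point with a given itinerary. -/
lemma FCtx.uniq_x (C : FCtx φ S η β α) {q : ℤ → Fin N} {x y : X} {τ u : ℤ → ℝ}
    (hx : IsRetSeq φ S β α x q τ) (hy : IsRetSeq φ S β α y q u) : y = x := by
  obtain ⟨hτ0, hτgap, hτmem⟩ := hx
  obtain ⟨hu0, hugap, humem⟩ := hy
  have htend := C.retseq_tendsto hτ0 (fun i => (hτgap i).1)
  obtain ⟨s, hsη, hys⟩ := C.hexp τ u x y hτ0 hu0
    (fun i => ⟨lt_of_lt_of_le C.hβ (hτgap i).1, (hτgap i).2⟩)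
    (fun i => abs_le.mpr ⟨by linarith [(hugap i).1, C.hβ.le, C.hβα], (hugap i).2⟩)
    htend.1 htend.2
    (fun i => Metric.dist_le_diam_of_mem ((C.closed (q i)).isCompact.isBounded)
      (hτmem i) (humem i) |>.trans (C.diam (q i)))
  have hyS : y ∈ S (q 0) := by
    have := humem 0
    rwa [hu0, C.flow.map_zero] at this
  have hxS : x ∈ S (q 0) := by
    have := hτmem 0
    rwa [hτ0, C.flow.map_zero] at this
  exact ((C.rigid hxS hyS hsη hys.symm).2).symm

/-- The return-time sequence of a given pair `(x, q)` is unique. -/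
lemma FCtx.uniq_ret (C : FCtx φ S η β α) {q : ℤ → Fin N} {x : X} {τ u : ℤ → ℝ}
    (hx : IsRetSeq φ S β α x q τ) (hy : IsRetSeq φ S β α x q u) : u = τ := by
  obtain ⟨hτ0, hτgap, hτmem⟩ := hx
  obtain ⟨hu0, hugap, humem⟩ := hy
  have key : ∀ i : ℤ, u i = τ i → u (i + 1) = τ (i + 1) ∧ u (i - 1) = τ (i - 1) := by
    intro i hi
    have step : ∀ j : ℤ, |u j - τ j| ≤ α - β → u j = τ j := by
      intro j hj
      have h1 : φ (u j - τ j) (φ (τ j) x) = φ (u j) x := by rw [C.flow.comp]; ring_nf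
      have h2 := C.rigid (hτmem j) (humem j)
        (le_trans hj (by linarith [C.hαη, C.hβ])) h1
      linarith [h2.1]
    refine ⟨step _ ?_, step _ ?_⟩
    · have g1 := hτgap i
      have g2 := hugap i
      rw [abs_le]; constructor <;> [skip; skip] <;> · rw [hi] at *; linarith [g1.1, g1.2, g2.1, g2.2]
    · have g1 := hτgap (i - 1)
      have g2 := hugap (i - 1)
      rw [show (i - 1 + 1 : ℤ) = i from by ring] at g1 g2
      rw [abs_le]; constructor <;> linarith [g1.1, g1.2, g2.1, g2.2]
  funext i
  induction i using Int.induction_on with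
  | zero => rw [hu0, hτ0]
  | succ k ih => exact (key k ih).1
  | pred k ih => exact (key (-(k:ℤ)) ih).2

/-- Two full-hit enumerations coincide. -/
lemma FCtx.uniq_fullHits (C : FCtx φ S η β α) {y : X} {ρ ρ' : ℤ → ℝ}
    (h1 : FullHits φ S β α y ρ) (h2 : FullHits φ S β α y ρ') : ρ = ρ' := by
  obtain ⟨h10, h1gap, h1mem, h1all⟩ := h1
  obtain ⟨h20, h2gap, h2mem, h2all⟩ := h2
  have hm1 : StrictMono ρ := seq_strictMono C.hβ (fun i => (h1gap i).1)
  have hm2 : StrictMono ρ' := seq_strictMono C.hβ (fun i => (h2gap i).1)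
  have key : ∀ i : ℤ, ρ i = ρ' i → ρ (i + 1) = ρ' (i + 1) ∧ ρ (i - 1) = ρ' (i - 1) := by
    intro i hi
    constructor
    · obtain ⟨m, hm⟩ := h2all _ (h1mem (i + 1))
      obtain ⟨m', hm'⟩ := h1all _ (h2mem (i + 1))
      have hmi : i + 1 ≤ m := by
        by_contra hle
        push_neg at hle
        have h3 : ρ' m ≤ ρ' i := hm2.monotone (by omega)
        have h4 : ρ i < ρ (i + 1) := hm1 (by omega)
        rw [hi] at h4
        rw [← hm] at h3
        linarith
      have hA : ρ' (i + 1) ≤ ρ (i + 1) := by rw [hm]; exact hm2.monotone hmi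
      have hmi' : i + 1 ≤ m' := by
        by_contra hle
        push_neg at hle
        have h3 : ρ m' ≤ ρ i := hm1.monotone (by omega)
        have h4 : ρ' i < ρ' (i + 1) := hm2 (by omega)
        rw [← hi] at h4
        rw [← hm'] at h3
        linarith
      have hB : ρ (i + 1) ≤ ρ' (i + 1) := by rw [hm']; exact hm1.monotone hmi'
      linarith
    · obtain ⟨m, hm⟩ := h2all _ (h1mem (i - 1))
      obtain ⟨m', hm'⟩ := h1all _ (h2mem (i - 1))
      have hmi : m ≤ i - 1 := by
        by_contra hle
        push_neg at hle
        have h3 : ρ' i ≤ ρ' m := hm2.monotone (by omega)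
        have h4 : ρ (i - 1) < ρ i := hm1 (by omega)
        rw [hi] at h4
        rw [← hm] at h3
        linarith
      have hA : ρ (i - 1) ≤ ρ' (i - 1) := by rw [hm]; exact hm2.monotone hmi
      have hmi' : m' ≤ i - 1 := by
        by_contra hle
        push_neg at hle
        have h3 : ρ i ≤ ρ m' := hm1.monotone (by omega)
        have h4 : ρ' (i - 1) < ρ' i := hm2 (by omega)
        rw [← hi] at h4
        rw [← hm'] at h3
        linarith
      have hB : ρ' (i - 1) ≤ ρ (i - 1) := by rw [hm']; exact hm1.monotone hmi'
      linarith
  funext i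
  induction i using Int.induction_on with
  | zero => rw [h10, h20]
  | succ k ih => exact (key k ih).1
  | pred k ih => exact (key (-(k:ℤ)) ih).2

/-- `Wset` is flow-invariant. -/
lemma FCtx.Wset_inv (C : FCtx φ S η β α) {y : X} (hy : y ∈ Wset φ S η) (r : ℝ) :
    φ r y ∈ Wset φ S η := by
  intro hmem
  apply hy
  simp only [Wset, mem_compl_iff, not_not, mem_iUnion] at hmem ⊢
  obtain ⟨r', ζ, hζ, hζr⟩ := hmem
  refine ⟨r' - r, ζ, hζ, ?_⟩
  show φ (r' - r) ζ = y
  have h1 : φ (-r) (φ r' ζ) = φ (r' - r) ζ := by rw [C.flow.comp]; ring_nf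
  have h2 : φ r' ζ = φ r y := hζr
  rw [← h1, h2, C.flow.cancel]

/-- Points of `S k` in `Wset` lie in the flow interior of `S k`. -/
lemma FCtx.mem_flowInt (C : FCtx φ S η β α) {p : X} {k : Fin N} (hp : p ∈ S k)
    (hpW : p ∈ Wset φ S η) :
    p ∈ interior (flowSet φ (Set.Icc (-(η / 2)) (η / 2)) (S k)) := by
  have hpZ : p ∉ Zbd φ S η := by
    intro hmem
    apply hpW
    simp only [Wset, mem_compl_iff, not_not, mem_iUnion]
    exact ⟨0, p, hmem, C.flow.map_zero p⟩
  have hbd : p ∉ flowBoundary φ η (S k) := fun h => hpZ (mem_iUnion.mpr ⟨k, h⟩)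
  have hcl : p ∈ closure (S k) := subset_closure hp
  by_contra hint
  exact hbd ⟨hcl, fun h => hint h.1⟩

end Uniq

lemma seq_locate {β : ℝ} (hβ : 0 < β) {ρ : ℤ → ℝ} (h0 : ρ 0 = 0)
    (hgap : ∀ i : ℤ, β ≤ ρ (i + 1) - ρ i) (s : ℝ) :
    ∃ i₀ : ℤ, ρ i₀ ≤ s ∧ s < ρ (i₀ + 1) := by
  have hmono := seq_growth hgap
  have hbddA : ∃ b : ℤ, ∀ i : ℤ, ρ i ≤ s → i ≤ b := by
    obtain ⟨m, hm⟩ := exists_nat_ge ((s + 1) / β)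
    refine ⟨m, fun i hi => ?_⟩
    by_contra hgt
    push_neg at hgt
    have h1 := hmono 0 i (by omega)
    rw [h0] at h1
    have h2 : (m : ℝ) ≤ (i : ℝ) := by exact_mod_cast le_of_lt (by exact_mod_cast hgt)
    have h3 : (m : ℝ) * β ≤ (i : ℝ) * β := by nlinarith
    rw [div_le_iff₀ hβ] at hm
    simp only [Int.cast_zero, sub_zero, zero_add] at h1
    linarith
  have hne : ∃ i : ℤ, ρ i ≤ s := by
    obtain ⟨m, hm⟩ := exists_nat_ge ((-s) / β)
    refine ⟨-(m : ℤ), ?_⟩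
    have h1 := hmono (-(m : ℤ)) 0 (by omega)
    rw [h0] at h1
    rw [div_le_iff₀ hβ] at hm
    push_cast at h1
    linarith
  obtain ⟨i₀, hi₀, hi₀max⟩ := Int.exists_greatest_of_bdd hbddA hne
  refine ⟨i₀, hi₀, ?_⟩
  by_contra hge
  push_neg at hge
  exact absurd (hi₀max (i₀ + 1) hge) (by omega)

section Main
variable [MetricSpace X] [CompactSpace X] {N : ℕ}
set_option linter.unusedSectionVars false
variable {φ : ℝ → X → X} {S : Fin N → Set X} {η β α : ℝ}

/-- `Qseq` is the itinerary of the canonical return-time sequence. -/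
lemma FCtx.Qseq_spec (C : FCtx φ S η β α) (hN : 0 < N) {y : X} (hy : y ∈ ⋃ i, S i) :
    IsRetSeq φ S β α y (Qseq φ S hN y) (fun i => retZ φ (⋃ k, S k) i y) := by
  have hF := C.fullHits_retZ hy
  refine ⟨hF.1, fun i => hF.2.1 i, fun i => ?_⟩
  have hex : ∃ j, φ (retZ φ (⋃ k, S k) i y) y ∈ S j := mem_iUnion.mp (hF.2.2.1 i)
  show φ (retZ φ (⋃ k, S k) i y) y ∈ S (Qseq φ S hN y i)
  unfold Qseq
  rw [dif_pos hex]
  exact hex.choose_spec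

/-- Main lemma: for `q` in the closure of the itineraries of `V`, any return-time
sequence of a point of `W` with itinerary `q` enumerates all hits of `G`. -/
lemma FCtx.main (C : FCtx φ S η β α) (hN : 0 < N) {q : ℤ → Fin N}
    (hq : q ∈ closure (Qseq φ S hN '' Vset φ S η)) {x : X} {τ : ℤ → ℝ}
    (hτ : IsRetSeq φ S β α x q τ) (hxW : x ∈ Wset φ S η) :
    FullHits φ S β α x τ := by
  obtain ⟨hτ0, hτgap, hτmem⟩ := hτ
  -- approximating sequence from the closure
  obtain ⟨qs, hqs, hqconv⟩ := mem_closure_iff_seq_limit.mp hq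
  choose xs hxsV hxsQ using hqs
  have hxsG : ∀ n, xs n ∈ ⋃ i, S i := fun n => (hxsV n).2
  set ρ : ℕ → ℤ → ℝ := fun n i => retZ φ (⋃ j, S j) i (xs n) with hρdef
  have hFH : ∀ n, FullHits φ S β α (xs n) (ρ n) := fun n => C.fullHits_retZ (hxsG n)
  have hRS : ∀ n, IsRetSeq φ S β α (xs n) (qs n) (ρ n) := by
    intro n
    have := C.Qseq_spec hN (hxsG n)
    rwa [hxsQ n] at this
  -- compactness: extract a convergent subsequence of points and return sequences
  set K : Set (X × (ℤ → ℝ)) :=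
    univ ×ˢ Set.pi univ (fun i : ℤ => Icc (-(|(i : ℝ)| * α)) (|(i : ℝ)| * α)) with hKdef
  have hα0 : (0:ℝ) ≤ α := le_trans C.hβ.le C.hβα
  have hKmem : ∀ n, (xs n, ρ n) ∈ K := by
    intro n
    refine ⟨mem_univ _, ?_⟩
    rw [mem_univ_pi]
    intro i
    have := seq_abs_bound hα0 (hFH n).1
      (fun j => le_trans C.hβ.le ((hFH n).2.1 j).1) (fun j => ((hFH n).2.1 j).2) i
    exact abs_le.mp this
  have hKcomp : IsCompact K :=
    isCompact_univ.prod (isCompact_univ_pi fun i => isCompact_Icc)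
  obtain ⟨⟨x', u⟩, hK', ψ, hψ, hconv⟩ := hKcomp.tendsto_subseq hKmem
  have hx' : Tendsto (fun n => xs (ψ n)) atTop (𝓝 x') := by
    have := (continuous_fst.tendsto (x', u)).comp hconv
    simpa [Function.comp_def] using this
  have hu : ∀ i : ℤ, Tendsto (fun n => ρ (ψ n) i) atTop (𝓝 (u i)) := by
    have h2 := (continuous_snd.tendsto (x', u)).comp hconv
    intro i
    have h3 := tendsto_pi_nhds.mp (by simpa [Function.comp] using h2) i
    simpa using h3
  have hsym : ∀ i : ℤ, ∀ᶠ n in atTop, qs (ψ n) i = q i := by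
    intro i
    have h1 : Tendsto (fun n => qs n i) atTop (𝓝 (q i)) := tendsto_pi_nhds.mp hqconv i
    have h2 : ∀ᶠ y in 𝓝 (q i), y = q i :=
      eventually_of_mem ((isOpen_discrete {q i}).mem_nhds rfl) (fun y hy => hy)
    exact (h1.comp hψ.tendsto_atTop).eventually h2
  have hflow : ∀ (g : ℕ → X) (r : ℕ → ℝ) (x₀ : X) (r₀ : ℝ),
      Tendsto g atTop (𝓝 x₀) → Tendsto r atTop (𝓝 r₀) →
      Tendsto (fun n => φ (r n) (g n)) atTop (𝓝 (φ r₀ x₀)) := by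
    intro g r x₀ r₀ hg hr
    have := (C.flow.cont.tendsto (x₀, r₀)).comp (hg.prodMk_nhds hr)
    simpa [Function.comp_def] using this
  -- the limit pair is a return-time pair for q
  have hu0 : u 0 = 0 := by
    have hc : Tendsto (fun n => ρ (ψ n) 0) atTop (𝓝 0) := by
      have he : (fun n : ℕ => ρ (ψ n) 0) = fun _ => (0:ℝ) := funext fun n => (hFH (ψ n)).1
      rw [he]; exact tendsto_const_nhds
    exact tendsto_nhds_unique (hu 0) hc
  have hugap : ∀ i : ℤ, β ≤ u (i + 1) - u i ∧ u (i + 1) - u i ≤ α := by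
    intro i
    have hg := (hu (i + 1)).sub (hu i)
    constructor
    · exact ge_of_tendsto hg (Eventually.of_forall fun n => ((hFH (ψ n)).2.1 i).1)
    · exact le_of_tendsto hg (Eventually.of_forall fun n => ((hFH (ψ n)).2.1 i).2)
  have humem : ∀ i : ℤ, φ (u i) x' ∈ S (q i) := by
    intro i
    have h1 : Tendsto (fun n => φ (ρ (ψ n) i) (xs (ψ n))) atTop (𝓝 (φ (u i) x')) :=
      hflow _ _ _ _ hx' (hu i)
    have h2 : ∀ᶠ n in atTop, φ (ρ (ψ n) i) (xs (ψ n)) ∈ S (q i) := by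
      filter_upwards [hsym i] with n hn
      have := (hRS (ψ n)).2.2 i
      rwa [hn] at this
    exact (C.closed (q i)).mem_of_tendsto h1 h2
  have hx'x : x' = x := C.uniq_x ⟨hτ0, hτgap, hτmem⟩ ⟨hu0, hugap, humem⟩
  subst hx'x
  have huτ : u = τ := C.uniq_ret ⟨hτ0, hτgap, hτmem⟩ ⟨hu0, hugap, humem⟩
  subst huτ
  refine ⟨hτ0, hτgap, fun i => mem_iUnion.mpr ⟨q i, hτmem i⟩, ?_⟩
  -- all hits are recorded
  intro s hs
  obtain ⟨k, hk⟩ := mem_iUnion.mp hs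
  by_contra hno
  push_neg at hno
  obtain ⟨i₀, hi₀le, hi₀lt⟩ := seq_locate C.hβ hτ0 (fun i => (hτgap i).1) s
  have hi₀lt' : u i₀ < s := lt_of_le_of_ne hi₀le (fun h => hno i₀ h.symm)
  set ε : ℝ := min (s - u i₀) (u (i₀ + 1) - s) with hεdef
  have hε : 0 < ε := lt_min (by linarith) (by linarith)
  -- the hit point is in the flow interior
  have hpW : φ s x' ∈ Wset φ S η := C.Wset_inv hxW s
  have hpint := C.mem_flowInt hk hpW
  have htendp : Tendsto (fun n => φ s (xs (ψ n))) atTop (𝓝 (φ s x')) :=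
    hflow _ _ _ _ hx' tendsto_const_nhds
  have hev_mem : ∀ᶠ n in atTop,
      φ s (xs (ψ n)) ∈ interior (flowSet φ (Icc (-(η/2)) (η/2)) (S k)) :=
    htendp.eventually_mem (isOpen_interior.mem_nhds hpint)
  have hev1 : ∀ᶠ n in atTop, |ρ (ψ n) i₀ - u i₀| < ε/2 := by
    have := Metric.tendsto_nhds.mp (hu i₀) (ε/2) (by positivity)
    simpa [Real.dist_eq] using this
  have hev2 : ∀ᶠ n in atTop, |ρ (ψ n) (i₀+1) - u (i₀+1)| < ε/2 := by
    have := Metric.tendsto_nhds.mp (hu (i₀+1)) (ε/2) (by positivity)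
    simpa [Real.dist_eq] using this
  obtain ⟨N₀, hN₀⟩ := eventually_atTop.mp ((hev_mem.and (hev1.and hev2)))
  -- choose hit corrections v n
  have hch : ∀ n : ℕ, ∃ v : ℝ, |v| ≤ η/2 ∧ φ (s - v) (xs (ψ (N₀ + n))) ∈ S k := by
    intro n
    have h := interior_subset (hN₀ (N₀ + n) (Nat.le_add_right _ _)).1
    obtain ⟨v, hv, w, hw, hvw⟩ := h
    refine ⟨v, abs_le.mpr ⟨hv.1, hv.2⟩, ?_⟩
    have h1 : φ (s - v) (xs (ψ (N₀ + n))) = φ (-v) (φ s (xs (ψ (N₀ + n)))) := by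
      rw [C.flow.comp]; ring_nf
    rw [h1, ← hvw, C.flow.cancel]
    exact hw
  choose v hvb hvS using hch
  -- v tends to 0 by rigidity of the cross-section
  have hxs2 : Tendsto (fun n => φ s (xs (ψ (N₀ + n)))) atTop (𝓝 (φ s x')) := by
    have hmono : StrictMono (fun n : ℕ => N₀ + n) := strictMono_id.const_add N₀
    have := htendp.comp hmono.tendsto_atTop
    simpa [Function.comp_def] using this
  have hv0 : Tendsto v atTop (𝓝 0) := by
    by_contra hnot
    rw [Metric.tendsto_atTop] at hnot
    push_neg at hnot
    obtain ⟨ε', hε', hfreq⟩ := hnot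
    have hfreq' : ∃ᶠ n in atTop, ε' ≤ |v n| := by
      rw [frequently_atTop]
      intro a
      obtain ⟨n, hn1, hn2⟩ := hfreq a
      exact ⟨n, hn1, by simpa [Real.dist_eq] using hn2⟩
    obtain ⟨θ, hθ, hθprop⟩ := Filter.extraction_of_frequently_atTop hfreq'
    have hmemI : ∀ m, v (θ m) ∈ Icc (-(η/2)) (η/2) := fun m => by
      have := abs_le.mp (hvb (θ m)); exact ⟨this.1, this.2⟩
    obtain ⟨v', hv'I, θ', hθ', hconv'⟩ := isCompact_Icc.tendsto_subseq hmemI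
    have hsub : Tendsto (fun m => φ s (xs (ψ (N₀ + θ (θ' m))))) atTop (𝓝 (φ s x')) := by
      have := hxs2.comp ((hθ.comp hθ').tendsto_atTop)
      simpa [Function.comp_def] using this
    have hvconv : Tendsto (fun m => v (θ (θ' m))) atTop (𝓝 v') := by
      have := hconv'
      simpa [Function.comp_def] using this
    have hlim : Tendsto (fun m => φ (-(v (θ (θ' m)))) (φ s (xs (ψ (N₀ + θ (θ' m))))))
        atTop (𝓝 (φ (-v') (φ s x'))) := hflow _ _ _ _ hsub hvconv.neg
    have hSk : φ (-v') (φ s x') ∈ S k := by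
      refine (C.closed k).mem_of_tendsto hlim (Eventually.of_forall fun m => ?_)
      have h1 : φ (-(v (θ (θ' m)))) (φ s (xs (ψ (N₀ + θ (θ' m))))) =
          φ (s - v (θ (θ' m))) (xs (ψ (N₀ + θ (θ' m)))) := by
        rw [C.flow.comp]; ring_nf
      rw [h1]
      exact hvS _
    have hre : φ v' (φ (-v') (φ s x')) = φ s x' := by
      rw [C.flow.comp, add_neg_cancel, C.flow.map_zero]
    have hrig := C.rigid hSk hk (d := v')
      (by
        have := abs_le.mpr ⟨hv'I.1, hv'I.2⟩
        have hη := C.hη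
        calc |v'| ≤ η/2 := this
          _ ≤ η := by linarith) hre
    have hge : ε' ≤ |v'| := by
      refine ge_of_tendsto ((continuous_abs.tendsto v').comp hvconv)
        (Eventually.of_forall fun m => ?_)
      exact hθprop (θ' m)
    rw [hrig.1] at hge
    simp at hge
    linarith
  -- pick a good index and derive the contradiction
  have hvsmall : ∀ᶠ n in atTop, |v n| < ε/2 := by
    have := Metric.tendsto_nhds.mp hv0 (ε/2) (by positivity)
    simpa [Real.dist_eq] using this
  obtain ⟨n, hn⟩ := hvsmall.exists
  have hN₀n := hN₀ (N₀ + n) (Nat.le_add_right _ _)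
  have h1 := hN₀n.2.1
  have h2 := hN₀n.2.2
  -- the hit s - v n must be one of the recorded return times
  obtain ⟨m, hm⟩ := (hFH (ψ (N₀ + n))).2.2.2 (s - v n) (mem_iUnion.mpr ⟨k, hvS n⟩)
  have hmonoρ : StrictMono (ρ (ψ (N₀ + n))) :=
    seq_strictMono C.hβ (fun j => ((hFH (ψ (N₀ + n))).2.1 j).1)
  have hεle1 : ε ≤ s - u i₀ := min_le_left _ _
  have hεle2 : ε ≤ u (i₀ + 1) - s := min_le_right _ _
  have habs1 := abs_lt.mp h1
  have habs2 := abs_lt.mp h2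
  have habsv := abs_lt.mp hn
  rcases le_or_gt m i₀ with hmle | hmgt
  · have := hmonoρ.monotone hmle
    linarith [hm ▸ this]
  · have hge : i₀ + 1 ≤ m := hmgt
    have := hmonoρ.monotone hge
    linarith [hm ▸ this]

end Main




section Final
variable [MetricSpace X] [CompactSpace X] {N : ℕ}
set_option linter.unusedSectionVars false
variable {φ : ℝ → X → X} {S : Fin N → Set X} {η β α : ℝ}

lemma FCtx.final (C : FCtx φ S η β α) [Nonempty X] (hN : 0 < N) :
    ∀ q ∈ closure (Qseq φ S hN '' Vset φ S η), ∀ t : ℝ,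
      0 ≤ t → t < fmap φ S β α q → ∀ z ∈ Vset φ S η,
      φ t (Pmap φ S β α q) = z → t = 0 ∧ q = Qseq φ S hN z := by
  intro q hq t ht0 htf z hzV hφtz
  have hfpos : 0 < fmap φ S β α q := lt_of_le_of_lt ht0 htf
  have hex : ∃ τ : ℤ → ℝ, IsRetSeq φ S β α (Pmap φ S β α q) q τ := by
    by_contra h
    have h0 : fmap φ S β α q = 0 := by unfold fmap; rw [dif_neg h]
    rw [h0] at hfpos
    exact lt_irrefl 0 hfpos
  set x := Pmap φ S β α q with hxdef
  set τ : ℤ → ℝ := hex.choose with hτdef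
  have hτ : IsRetSeq φ S β α x q τ := hex.choose_spec
  have hfq : fmap φ S β α q = τ 1 := by unfold fmap; rw [dif_pos hex]
  have hzW : z ∈ Wset φ S η := hzV.1
  have hzG : z ∈ ⋃ i, S i := hzV.2
  have hxz : x = φ (-t) z := by
    rw [← hφtz]
    exact (C.flow.cancel t x).symm
  have hxW : x ∈ Wset φ S η := by rw [hxz]; exact C.Wset_inv hzW (-t)
  have hFH : FullHits φ S β α x τ := C.main hN hq hτ hxW
  obtain ⟨i, hi⟩ := hFH.2.2.2 t (by rw [hφtz]; exact hzG)
  have hmono : StrictMono τ := seq_strictMono C.hβ (fun j => (hFH.2.1 j).1)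
  have ht00 : t = 0 := by
    rcases lt_trichotomy i 0 with h | h | h
    · have hle : τ i ≤ τ (-1) := hmono.monotone (by omega)
      have h1 := (hFH.2.1 (-1)).1
      rw [show (-1 + 1 : ℤ) = 0 by ring, hFH.1] at h1
      linarith [C.hβ]
    · subst h; exact hi.trans hFH.1
    · have h1 : τ 1 ≤ τ i := hmono.monotone (by omega)
      linarith
  refine ⟨ht00, ?_⟩
  have hxeq : x = z := by rw [← hφtz, ht00, C.flow.map_zero]
  rw [← hxeq]
  have hxG : x ∈ ⋃ i, S i := by rw [hxeq]; exact hzG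
  have hret : (fun i => retZ φ (⋃ j, S j) i x) = τ :=
    C.uniq_fullHits (C.fullHits_retZ hxG) hFH
  funext j
  have hmemq : φ (τ j) x ∈ S (q j) := hτ.2.2 j
  have hretj : retZ φ (⋃ k, S k) j x = τ j := congrFun hret j
  have hex2 : ∃ l : Fin N, φ (retZ φ (⋃ k, S k) j x) x ∈ S l :=
    ⟨q j, by rw [hretj]; exact hmemq⟩
  have hQ : Qseq φ S hN x j = hex2.choose := by unfold Qseq; rw [dif_pos hex2]
  have hmem' : φ (τ j) x ∈ S hex2.choose := by
    rw [← hretj]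
    exact hex2.choose_spec
  rw [hQ]
  by_contra hne
  exact Set.disjoint_left.mp (C.disj hne) hmemq hmem'

end Final


/-- If `(q,t) ∈ Λ_f` with `0 ≤ t < f(q)` and `π(q,t) = Φ_t(P(q)) = z ∈ V`,
then `t = 0` and `q = Q(z)`. -/
theorem pi_eq_mem_V
    {X : Type*} [MetricSpace X] [CompactSpace X] [Nonempty X]
    (φ : ℝ → X → X) (hφ : IsFlow X φ)
    {N : ℕ} (hN : 0 < N) (S : Fin N → Set X) (η β α : ℝ)
    (hclosed : ∀ i, IsClosed (S i))
    (hdisj : Pairwise (Function.onFun Disjoint S))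
    (hcs : ∀ i, IsCrossSection φ η (S i))
    (hβ : 0 < β) (hβα : β ≤ α) (hαη : α < η)
    (hdiam : ∀ i, Metric.diam (S i) ≤ α)
    (hα : ∀ (t u : ℤ → ℝ) (x y : X), t 0 = 0 → u 0 = 0 →
      (∀ i : ℤ, 0 < t (i + 1) - t i ∧ t (i + 1) - t i ≤ α) →
      (∀ i : ℤ, |u (i + 1) - u i| ≤ α) →
      Filter.Tendsto (fun n : ℕ => t (n : ℤ)) Filter.atTop Filter.atTop →
      Filter.Tendsto (fun n : ℕ => t (-(n : ℤ))) Filter.atTop Filter.atBot →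
      (∀ i : ℤ, dist (φ (t i) x) (φ (u i) y) ≤ α) →
      ∃ s : ℝ, |s| ≤ η ∧ y = φ s x)
    (hcov₁ : flowSet φ (Set.Icc 0 α) (⋃ i, S i) = Set.univ)
    (hcov₂ : flowSet φ (Set.Icc (-α) 0) (⋃ i, S i) = Set.univ)
    (hβdisj : Pairwise (Function.onFun Disjoint fun i => flowSet φ (Set.Icc 0 β) (S i))) :
    ∀ q ∈ closure (Qseq φ S hN '' Vset φ S η), ∀ t : ℝ,
      0 ≤ t → t < fmap φ S β α q → ∀ z ∈ Vset φ S η,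
      φ t (Pmap φ S β α q) = z → t = 0 ∧ q = Qseq φ S hN z := by
  intro q hq t ht0 htf z hzV hφtz
  have C : FCtx φ S η β α :=
    ⟨hφ, hclosed, hdisj, hcs, hβ, hβα, hαη, hdiam, hα, hcov₁, hcov₂, hβdisj⟩
  exact C.final hN q hq t ht0 htf z hzV hφtz
end

section
/- Let (X,Φ) be a topological flow without fixed points. Then for every x ∈ X there exists a closed cross-section S such that x ∈ Int^Φ(S). -/
open Set Topology

variable {X : Type*}

/-- A fixed point of the flow. -/
def IsFixedPoint (φ : ℝ → X → X) (x : X) : Prop := ∀ t : ℝ, φ t x = x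

/-- **Whitney.** In a topological flow without fixed points, every point lies in the flow
interior of some closed cross-section. -/
theorem exists_closed_crossSection
    {X : Type*} [MetricSpace X] [CompactSpace X]
    (φ : ℝ → X → X) (hφ : IsFlow X φ)
    (hfix : ∀ x : X, ¬ IsFixedPoint φ x) :
    ∀ x : X, ∃ (η : ℝ) (S : Set X),
      IsClosed S ∧ IsCrossSection φ η S ∧ x ∈ flowInterior φ η S := by
  intro x
  obtain ⟨hc, h0, hadd⟩ := hφ
  have hinv : ∀ (t : ℝ) (y : X), φ (-t) (φ t y) = y := by
    intro t y
    rw [← hadd, neg_add_cancel, h0]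
  -- Step 1: a positive time at which `x` moves.
  obtain ⟨T, hT0, hTx⟩ : ∃ T : ℝ, 0 < T ∧ φ T x ≠ x := by
    obtain ⟨t, ht⟩ := not_forall.1 (hfix x)
    rcases lt_trichotomy t 0 with h | h | h
    · refine ⟨-t, by linarith, fun hq => ht ?_⟩
      calc φ t x = φ t (φ (-t) x) := by rw [hq]
        _ = φ (t + -t) x := (hadd t (-t) x).symm
        _ = x := by rw [add_neg_cancel, h0]
    · exact absurd (h ▸ h0 x) ht
    · exact ⟨t, h, ht⟩
  set ε : ℝ := dist (φ T x) x with hε_def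
  have hε : 0 < ε := dist_pos.2 hTx
  -- Continuity helpers.
  have hφt : ∀ t : ℝ, Continuous fun y : X => φ t y := fun t =>
    hc.comp (continuous_id.prodMk continuous_const)
  have hφy : ∀ y : X, Continuous fun s : ℝ => φ s y := fun y =>
    hc.comp (continuous_const.prodMk continuous_id)
  -- The auxiliary function F and the Lyapunov-type function L.
  set F : X → ℝ → ℝ := fun y s => dist (φ s y) x with hF_def
  have hFc : Continuous (Function.uncurry F) := (hc.dist continuous_const)
  have hFy : ∀ y : X, Continuous (F y) := fun y => ((hφy y).dist continuous_const)
  have hFint : ∀ (y : X) (a b : ℝ), IntervalIntegrable (F y) MeasureTheory.volume a b :=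
    fun y a b => (hFy y).intervalIntegrable a b
  set L : X → ℝ := fun y => ∫ s in (0:ℝ)..T, F y s with hL_def
  have hLc : Continuous L :=
    intervalIntegral.continuous_parametric_intervalIntegral_of_continuous' hFc 0 T
  -- L along the flow.
  have hLshift : ∀ (t : ℝ) (y : X), L (φ t y) = ∫ s in t..(T + t), F y s := by
    intro t y
    have h1 : ∀ s : ℝ, F (φ t y) s = F y (s + t) := by
      intro s
      simp only [hF_def]
      rw [hadd]
    calc L (φ t y) = ∫ s in (0:ℝ)..T, F y (s + t) :=
          intervalIntegral.integral_congr fun s _ => h1 s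
      _ = ∫ s in (0 + t)..(T + t), F y s := intervalIntegral.integral_comp_add_right _ t
      _ = ∫ s in t..(T + t), F y s := by rw [zero_add]
  have hdiff : ∀ (y : X) (a b : ℝ),
      L (φ b y) - L (φ a y) = ∫ s in a..b, (F y (s + T) - F y s) := by
    intro y a b
    have i1 : (∫ s in a..(T + a), F y s) + ∫ s in (T + a)..(T + b), F y s
        = ∫ s in a..(T + b), F y s :=
      intervalIntegral.integral_add_adjacent_intervals (hFint y _ _) (hFint y _ _)
    have i2 : (∫ s in a..b, F y s) + ∫ s in b..(T + b), F y s
        = ∫ s in a..(T + b), F y s :=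
      intervalIntegral.integral_add_adjacent_intervals (hFint y _ _) (hFint y _ _)
    have i3 : (∫ s in a..b, F y (s + T)) = ∫ s in (T + a)..(T + b), F y s := by
      rw [intervalIntegral.integral_comp_add_right, add_comm a T, add_comm b T]
    have hint1 : IntervalIntegrable (fun s => F y (s + T)) MeasureTheory.volume a b :=
      ((hFy y).comp (continuous_id.add continuous_const)).intervalIntegrable a b
    rw [hLshift, hLshift, intervalIntegral.integral_sub hint1 (hFint y a b), i3]
    linarith
  -- Step 2: a region where L strictly increases along the flow.
  set G : X × ℝ → ℝ := fun p => F p.1 (p.2 + T) - F p.1 p.2 with hG_def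
  have hGc : Continuous G := by
    apply Continuous.sub
    · exact hFc.comp (continuous_fst.prodMk (continuous_snd.add continuous_const))
    · exact hFc
  have hGx : G (x, 0) = ε := by
    simp only [hG_def, hF_def, zero_add, h0, dist_self, hε_def, sub_zero]
  obtain ⟨r, hr, hball⟩ : ∃ r > 0, Metric.ball ((x, (0:ℝ))) r ⊆ G ⁻¹' Set.Ioi (ε / 2) := by
    apply Metric.isOpen_iff.1 (isOpen_Ioi.preimage hGc)
    simp only [Set.mem_preimage, Set.mem_Ioi, hGx]
    linarith
  have hG : ∀ (y : X) (s : ℝ), dist y x < r → |s| < r → ε / 2 < F y (s + T) - F y s := by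
    intro y s h1 h2
    have : (y, s) ∈ Metric.ball ((x, (0:ℝ))) r := by
      rw [Metric.mem_ball, Prod.dist_eq]
      apply max_lt h1
      rwa [Real.dist_eq, sub_zero]
    exact hball this
  -- Step 3: a small neighborhood that flows into the ball of radius r/2.
  obtain ⟨r₂, hr₂pos, hball₂⟩ : ∃ r₂ > 0, Metric.ball ((x, (0:ℝ))) r₂ ⊆
      (fun p : X × ℝ => φ p.2 p.1) ⁻¹' Metric.ball x (r / 2) := by
    apply Metric.isOpen_iff.1 (Metric.isOpen_ball.preimage hc)
    simp only [Set.mem_preimage, h0, Metric.mem_ball, dist_self]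
    linarith
  have hr₂ : ∀ (z : X) (s : ℝ), dist z x < r₂ → |s| < r₂ → dist (φ s z) x < r / 2 := by
    intro z s h1 h2
    have : (z, s) ∈ Metric.ball ((x, (0:ℝ))) r₂ := by
      rw [Metric.mem_ball, Prod.dist_eq]
      apply max_lt h1
      rwa [Real.dist_eq, sub_zero]
    exact hball₂ this
  -- The injectivity time.
  set η : ℝ := min (r / 4) (r₂ / 2) with hη_def
  have hη : 0 < η := lt_min (by linarith) (by linarith)
  have hηr : η ≤ r / 4 := min_le_left _ _
  have hηr₂ : η ≤ r₂ / 2 := min_le_right _ _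
  -- Strict monotonicity of L along short orbit pieces near x.
  have hmono : ∀ y : X, dist y x < r → ∀ a b : ℝ, -(2 * η) ≤ a → b ≤ 2 * η → a ≤ b →
      L (φ a y) + ε / 2 * (b - a) ≤ L (φ b y) := by
    intro y hy a b ha hb hab
    have hbound : ∀ s ∈ Set.Icc a b, ε / 2 ≤ F y (s + T) - F y s := by
      intro s hs
      have hs' : |s| < r := by
        rw [abs_lt]
        constructor
        · linarith [hs.1]
        · linarith [hs.2]
      exact (hG y s hy hs').le
    have hint1 : IntervalIntegrable (fun _ : ℝ => ε / 2) MeasureTheory.volume a b :=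
      intervalIntegrable_const
    have hint2 : IntervalIntegrable (fun s => F y (s + T) - F y s) MeasureTheory.volume a b :=
      (((hFy y).comp (continuous_id.add continuous_const)).sub (hFy y)).intervalIntegrable a b
    have hmle := intervalIntegral.integral_mono_on hab hint1 hint2 hbound
    rw [intervalIntegral.integral_const, smul_eq_mul] at hmle
    have hdd := hdiff y a b
    nlinarith [hmle, hdd]
  -- The cross-section.
  set S : Set X := Metric.closedBall x (r / 2) ∩ L ⁻¹' {L x} with hS_def
  have hScl : IsClosed S := Metric.isClosed_closedBall.inter (isClosed_singleton.preimage hLc)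
  have hxS : x ∈ S := ⟨Metric.mem_closedBall_self (by linarith), rfl⟩
  have hSr : ∀ y ∈ S, dist y x < r := by
    intro y hy
    have := hy.1
    rw [Metric.mem_closedBall] at this
    linarith
  refine ⟨η, S, hScl, ⟨hη, ?_⟩, ?_, hxS⟩
  · -- injectivity
    rintro ⟨y₁, t₁⟩ ⟨hy₁, ht₁⟩ ⟨y₂, t₂⟩ ⟨hy₂, ht₂⟩ heq
    simp only at heq hy₁ hy₂ ht₁ ht₂
    have hy2eq : φ (t₁ - t₂) y₁ = y₂ := by
      calc φ (t₁ - t₂) y₁ = φ (-t₂ + t₁) y₁ := by ring_nf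
        _ = φ (-t₂) (φ t₁ y₁) := hadd (-t₂) t₁ y₁
        _ = φ (-t₂) (φ t₂ y₂) := by rw [heq]
        _ = y₂ := hinv t₂ y₂
    have hL1 : L y₁ = L x := hy₁.2
    have hL2 : L y₂ = L x := hy₂.2
    have hy₁r : dist y₁ x < r := hSr y₁ hy₁
    have ht₁' := ht₁
    have ht₂' := ht₂
    rw [Set.mem_Icc] at ht₁' ht₂'
    have hLeq : L (φ (t₁ - t₂) y₁) = L (φ 0 y₁) := by
      rw [hy2eq, h0, hL1, hL2]
    have hteq : t₁ = t₂ := by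
      by_contra hne
      rcases lt_or_gt_of_ne hne with h | h
      · -- t₁ - t₂ < 0
        have := hmono y₁ hy₁r (t₁ - t₂) 0 (by linarith [ht₁'.1, ht₂'.2]) (by linarith) (by linarith)
        rw [hLeq] at this
        nlinarith
      · have := hmono y₁ hy₁r 0 (t₁ - t₂) (by linarith) (by linarith [ht₁'.2, ht₂'.1]) (by linarith)
        rw [hLeq] at this
        nlinarith
    have : y₁ = y₂ := by
      rw [← hy2eq, hteq, sub_self, h0]
    simp [this, hteq]
  · -- x lies in the interior of the flow set
    set W : Set X := Metric.ball x r₂ ∩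
        ({z | L (φ (-(η / 2)) z) < L x} ∩ {z | L x < L (φ (η / 2) z)}) with hW_def
    have hWopen : IsOpen W := by
      apply Metric.isOpen_ball.inter
      apply IsOpen.inter
      · exact isOpen_Iio.preimage (hLc.comp (hφt (-(η / 2))))
      · exact isOpen_Ioi.preimage (hLc.comp (hφt (η / 2)))
    have hxW : x ∈ W := by
      refine ⟨Metric.mem_ball_self hr₂pos, ?_, ?_⟩
      · have := hmono x (by simpa using hr) (-(η / 2)) 0 (by linarith) (by linarith) (by linarith)
        rw [h0] at this
        simp only [Set.mem_setOf_eq]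
        nlinarith
      · have := hmono x (by simpa using hr) 0 (η / 2) (by linarith) (by linarith) (by linarith)
        rw [h0] at this
        simp only [Set.mem_setOf_eq]
        nlinarith
    have hWsub : W ⊆ flowSet φ (Set.Icc (-(η / 2)) (η / 2)) S := by
      rintro z ⟨hz₂, hzlo, hzhi⟩
      simp only [Set.mem_setOf_eq] at hzlo hzhi
      have hψc : ContinuousOn (fun s : ℝ => L (φ s z)) (Set.Icc (-(η / 2)) (η / 2)) :=
        (hLc.comp (hφy z)).continuousOn
      have hIVT := intermediate_value_Icc (by linarith : -(η / 2) ≤ η / 2) hψc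
      have hLxmem : L x ∈ Set.Icc (L (φ (-(η / 2)) z)) (L (φ (η / 2) z)) :=
        ⟨hzlo.le, hzhi.le⟩
      obtain ⟨s, hsmem, hseq⟩ := hIVT hLxmem
      have hsabs : |s| < r₂ := by
        rw [abs_lt]
        constructor
        · linarith [hsmem.1]
        · linarith [hsmem.2]
      have hyz : dist (φ s z) x < r / 2 := hr₂ z s (by simpa using hz₂) hsabs
      have hyS : φ s z ∈ S := ⟨Metric.mem_closedBall.2 hyz.le, hseq⟩
      exact ⟨-s, ⟨by linarith [hsmem.2], by linarith [hsmem.1]⟩, φ s z, hyS, hinv s z⟩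
    exact mem_interior.2 ⟨W, hWsub, hWopen, hxW⟩
end

section
/- Let (X,Φ) be a topological flow, let S be a set contained in a closed cross-section, and let U ⊂ S. Then ∂^Φ(U) = ∂_S(U) ∪ (closure(U) ∩ ∂^Φ(S)). -/
open Set Topology

variable {X : Type*}

/-- `∂_S U`: the boundary of `U` in the subspace topology of `S`, as a subset of `X`. -/
def relBoundary [TopologicalSpace X] (S U : Set X) : Set X :=
  (fun y : S => (y : X)) '' frontier {y : S | (y : X) ∈ U}

/-- `Int_S U`: the interior of `U` in the subspace topology of `S`, as a subset of `X`. -/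
def relInterior [TopologicalSpace X] (S U : Set X) : Set X :=
  (fun y : S => (y : X)) '' interior {y : S | (y : X) ∈ U}

set_option linter.unusedSectionVars false

section Aux
variable [TopologicalSpace X]

lemma flowSet_eq_image (φ : ℝ → X → X) (L : Set ℝ) (A : Set X) :
    flowSet φ L A = (fun p : X × ℝ => φ p.2 p.1) '' (A ×ˢ L) := by
  ext y
  constructor
  · rintro ⟨t, ht, x, hx, rfl⟩; exact ⟨(x, t), ⟨hx, ht⟩, rfl⟩
  · rintro ⟨⟨x, t⟩, ⟨hx, ht⟩, rfl⟩; exact ⟨t, ht, x, hx, rfl⟩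

lemma mem_relInterior_iff {S U : Set X} {x : X} :
    x ∈ relInterior S U ↔ x ∈ S ∧ ∃ V : Set X, IsOpen V ∧ x ∈ V ∧ V ∩ S ⊆ U := by
  constructor
  · rintro ⟨y, hy, rfl⟩
    obtain ⟨t, hts, hto, hyt⟩ := mem_interior.mp hy
    obtain ⟨V, hV, rfl⟩ := isOpen_induced_iff.mp hto
    refine ⟨y.2, V, hV, hyt, ?_⟩
    rintro z ⟨hzV, hzS⟩
    exact hts (show (⟨z, hzS⟩ : S) ∈ _ from hzV)
  · rintro ⟨hxS, V, hV, hxV, hVSU⟩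
    refine ⟨⟨x, hxS⟩, ?_, rfl⟩
    apply mem_interior.mpr
    exact ⟨(fun y : S => (y : X)) ⁻¹' V, fun z hz => hVSU ⟨hz, z.2⟩,
      hV.preimage continuous_subtype_val, hxV⟩

lemma relBoundary_eq {S U : Set X} (hUS : U ⊆ S) :
    relBoundary S U = (closure U ∩ S) \ relInterior S U := by
  have himg : (fun y : S => (y : X)) '' closure {y : S | (y : X) ∈ U}
      = closure U ∩ S := by
    ext x
    constructor
    · rintro ⟨y, hy, rfl⟩
      have := closure_subtype.mp hy
      rw [show (fun y : S => (y : X)) '' {y : S | (y : X) ∈ U} = U by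
        ext z; constructor
        · rintro ⟨w, hw, rfl⟩; exact hw
        · intro hz; exact ⟨⟨z, hUS hz⟩, hz, rfl⟩] at this
      exact ⟨this, y.2⟩
    · rintro ⟨hxc, hxS⟩
      refine ⟨⟨x, hxS⟩, closure_subtype.mpr ?_, rfl⟩
      rw [show (fun y : S => (y : X)) '' {y : S | (y : X) ∈ U} = U by
        ext z; constructor
        · rintro ⟨w, hw, rfl⟩; exact hw
        · intro hz; exact ⟨⟨z, hUS hz⟩, hz, rfl⟩]
      exact hxc
  rw [relBoundary, frontier, Set.image_diff Subtype.coe_injective, himg, relInterior]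

end Aux

lemma flowInterior_eq_inter
    {X : Type*} [MetricSpace X] [CompactSpace X]
    (φ : ℝ → X → X) (hφ : IsFlow X φ)
    (η : ℝ) (C : Set X) (hC : IsClosed C) (hcs : IsCrossSection φ η C)
    (S U : Set X) (hSC : S ⊆ C) (hUS : U ⊆ S) :
    flowInterior φ η U = relInterior S U ∩ flowInterior φ η S := by
  obtain ⟨hη, hinj⟩ := hcs
  have hIcc : Set.Icc (-(η/2)) (η/2) ⊆ Set.Icc (-η) η := by
    apply Set.Icc_subset_Icc <;> nlinarith
  -- key injectivity consequence: C ∩ flowSet φ Icc(η/2) A ⊆ A for A ⊆ C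
  have key : ∀ A : Set X, A ⊆ C → ∀ y ∈ C, y ∈ flowSet φ (Set.Icc (-(η/2)) (η/2)) A → y ∈ A := by
    rintro A hAC y hyC ⟨t, ht, u, hu, hut⟩
    have h1 : ((u, t) : X × ℝ) ∈ C ×ˢ Set.Icc (-η) η := ⟨hAC hu, hIcc ht⟩
    have h2 : ((y, 0) : X × ℝ) ∈ C ×ˢ Set.Icc (-η) η :=
      ⟨hyC, by constructor <;> simp <;> linarith⟩
    have heq : (fun p : X × ℝ => φ p.2 p.1) (u, t) = (fun p : X × ℝ => φ p.2 p.1) (y, 0) := by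
      simp only [hφ.map_zero]; exact hut
    have := hinj h1 h2 heq
    have : u = y := congrArg Prod.fst this
    rwa [← this]
  apply Set.Subset.antisymm
  · rintro x ⟨hxi, hxU⟩
    refine ⟨mem_relInterior_iff.mpr ⟨hUS hxU, interior (flowSet φ (Set.Icc (-(η/2)) (η/2)) U),
      isOpen_interior, hxi, ?_⟩, ?_, hUS hxU⟩
    · rintro y ⟨hyi, hyS⟩
      exact key U (fun z hz => hSC (hUS hz)) y (hSC hyS) (interior_subset hyi)
    · exact interior_mono (fun y hy => by
        obtain ⟨t, ht, u, hu, huy⟩ := hy; exact ⟨t, ht, u, hUS hu, huy⟩) hxi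
  · rintro x ⟨hxrel, hxiS, hxS⟩
    obtain ⟨-, V, hV, hxV, hVSU⟩ := mem_relInterior_iff.mp hxrel
    have hxU : x ∈ U := hVSU ⟨hxV, hxS⟩
    refine ⟨?_, hxU⟩
    -- K' : image of compact (C \ V) × Icc, closed, not containing x
    set K' := flowSet φ (Set.Icc (-(η/2)) (η/2)) (C \ V) with hK'
    have hK'comp : IsCompact K' := by
      rw [hK', flowSet_eq_image]
      exact (((hC.sdiff hV).isCompact).prod isCompact_Icc).image hφ.cont
    have hxK' : x ∉ K' := by
      intro hmem
      have hx' := key (C \ V) (fun z hz => hz.1) x (hSC hxS) hmem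
      exact hx'.2 hxV
    have hopen : IsOpen (K'ᶜ ∩ interior (flowSet φ (Set.Icc (-(η/2)) (η/2)) S)) :=
      (hK'comp.isClosed.isOpen_compl).inter isOpen_interior
    apply mem_interior.mpr
    refine ⟨K'ᶜ ∩ interior (flowSet φ (Set.Icc (-(η/2)) (η/2)) S), ?_, hopen, hxK', hxiS⟩
    rintro y ⟨hyK', hyi⟩
    obtain ⟨t, ht, s, hs, hst⟩ := interior_subset hyi
    have hsV : s ∈ V := by
      by_contra hsV
      exact hyK' ⟨t, ht, s, ⟨hSC hs, hsV⟩, hst⟩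
    exact ⟨t, ht, s, hVSU ⟨hsV, hs⟩, hst⟩


/-- For `U ⊆ S`, `S` contained in a closed cross-section:
`∂^Φ(U) = ∂_S(U) ∪ (closure U ∩ ∂^Φ(S))`. -/
theorem flowBoundary_eq_relBoundary_union
    {X : Type*} [MetricSpace X] [CompactSpace X]
    (φ : ℝ → X → X) (hφ : IsFlow X φ)
    (η : ℝ) (C : Set X) (hC : IsClosed C) (hcs : IsCrossSection φ η C)
    (S U : Set X) (hSC : S ⊆ C) (hUS : U ⊆ S) :
    flowBoundary φ η U = relBoundary S U ∪ (closure U ∩ flowBoundary φ η S) := by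
  have hFI := flowInterior_eq_inter φ hφ η C hC hcs S U hSC hUS
  have hclUS : closure U ⊆ closure S := closure_mono hUS
  have hFIS_sub : flowInterior φ η S ⊆ S := fun x hx => hx.2
  have hrel := relBoundary_eq (X := X) hUS
  ext x
  simp only [flowBoundary, hFI, hrel, Set.mem_diff, Set.mem_union, Set.mem_inter_iff]
  constructor
  · rintro ⟨hxc, hxn⟩
    by_cases hxS : x ∈ flowInterior φ η S
    · left
      exact ⟨⟨hxc, hFIS_sub hxS⟩, fun hr => hxn ⟨hr, hxS⟩⟩
    · right
      exact ⟨hxc, hclUS hxc, hxS⟩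
  · rintro (⟨⟨hxc, hxSm⟩, hxn⟩ | ⟨hxc, -, hxn⟩)
    · exact ⟨hxc, fun h => hxn h.1⟩
    · exact ⟨hxc, fun h => hxn h.2⟩
end

section
/- Let (X,Φ) be a topological flow and let U be a subset of a closed cross-section S. If Int^Φ(U) = U, then U is relatively open in S. Conversely, if U ∩ ∂^Φ(S) = ∅ and U is relatively open in S, then Int^Φ(U) = U. -/
open Set Topology

variable {X : Type*}

/-- If `Int^Φ(U) = U` then `U` is relatively open in the closed cross-section `S`;
conversely, if `U ∩ ∂^Φ(S) = ∅` and `U` is relatively open in `S`, then `Int^Φ(U) = U`. -/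
theorem flowInterior_eq_iff_relOpen
    {X : Type*} [MetricSpace X] [CompactSpace X]
    (φ : ℝ → X → X) (hφ : IsFlow X φ)
    (η : ℝ) (S : Set X) (hS : IsClosed S) (hcs : IsCrossSection φ η S)
    (U : Set X) (hUS : U ⊆ S) :
    (flowInterior φ η U = U → IsOpen {y : S | (y : X) ∈ U}) ∧
    (U ∩ flowBoundary φ η S = ∅ → IsOpen {y : S | (y : X) ∈ U} →
      flowInterior φ η U = U) := by
  obtain ⟨hη, hinj⟩ := hcs
  have hsub : Set.Icc (-(η / 2)) (η / 2) ⊆ Set.Icc (-η) η :=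
    Set.Icc_subset_Icc (by linarith) (by linarith)
  -- key injectivity consequence
  have key : ∀ y ∈ S, ∀ t ∈ Set.Icc (-(η / 2)) (η / 2), ∀ s ∈ S, φ t s = y → s = y := by
    intro y hyS t ht s hsS hst
    have h1 : ((s, t) : X × ℝ) ∈ S ×ˢ Set.Icc (-η) η := ⟨hsS, hsub ht⟩
    have h2 : ((y, 0) : X × ℝ) ∈ S ×ˢ Set.Icc (-η) η :=
      ⟨hyS, show (0:ℝ) ∈ Set.Icc (-η) η from ⟨by linarith, by linarith⟩⟩
    have := hinj h1 h2 (by simpa [hφ.map_zero] using hst)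
    exact congrArg Prod.fst this
  constructor
  · intro hU
    have heq : {y : S | (y : X) ∈ U} =
        Subtype.val ⁻¹' interior (flowSet φ (Set.Icc (-(η / 2)) (η / 2)) U) := by
      ext ⟨y, hyS⟩
      simp only [Set.mem_setOf_eq, Set.mem_preimage]
      constructor
      · intro hyU
        rw [← hU] at hyU
        exact hyU.1
      · intro hy
        obtain ⟨t, ht, s, hsU, hst⟩ := interior_subset hy
        exact (key y hyS t ht s (hUS hsU) hst) ▸ hsU
    rw [heq]
    exact isOpen_interior.preimage continuous_subtype_val
  · intro hbd hopen
    obtain ⟨V, hV, hVeq⟩ := isOpen_induced_iff.mp hopen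
    have hUV : U = S ∩ V := by
      ext x
      constructor
      · intro hx
        refine ⟨hUS hx, ?_⟩
        have : (⟨x, hUS hx⟩ : S) ∈ Subtype.val ⁻¹' V := by rw [hVeq]; exact hx
        exact this
      · rintro ⟨hxS, hxV⟩
        have : (⟨x, hxS⟩ : S) ∈ Subtype.val ⁻¹' V := hxV
        rw [hVeq] at this
        exact this
    have hSUclosed : IsClosed (S \ U) := by
      have : S \ U = S ∩ Vᶜ := by
        rw [hUV]; ext x; simp only [Set.mem_diff, Set.mem_inter_iff, Set.mem_compl_iff]; tauto
      rw [this]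
      exact hS.inter hV.isClosed_compl
    set K := (fun p : X × ℝ => φ p.2 p.1) '' ((S \ U) ×ˢ Set.Icc (-(η / 2)) (η / 2)) with hK
    have hKcomp : IsCompact K :=
      (hSUclosed.isCompact.prod isCompact_Icc).image hφ.cont
    have hKclosed : IsClosed K := hKcomp.isClosed
    apply Set.eq_of_subset_of_subset (fun x hx => hx.2)
    intro x hx
    refine ⟨?_, hx⟩
    have hxS : x ∈ S := hUS hx
    have hxFI : x ∈ flowInterior φ η S := by
      by_contra h
      have : x ∈ U ∩ flowBoundary φ η S := ⟨hx, subset_closure hxS, h⟩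
      rw [hbd] at this
      exact this
    have hxK : x ∉ K := by
      rintro ⟨⟨s, t⟩, ⟨⟨hsS, hsU⟩, ht⟩, heq⟩
      exact hsU ((key x hxS t ht s hsS heq) ▸ hx)
    have hWsub : interior (flowSet φ (Set.Icc (-(η / 2)) (η / 2)) S) ∩ Kᶜ ⊆
        flowSet φ (Set.Icc (-(η / 2)) (η / 2)) U := by
      rintro y ⟨hy1, hy2⟩
      obtain ⟨t, ht, s, hsS, hst⟩ := interior_subset hy1
      by_cases hsU : s ∈ U
      · exact ⟨t, ht, s, hsU, hst⟩
      · exact absurd ⟨(s, t), ⟨⟨hsS, hsU⟩, ht⟩, hst⟩ hy2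
    have hWopen : IsOpen (interior (flowSet φ (Set.Icc (-(η / 2)) (η / 2)) S) ∩ Kᶜ) :=
      isOpen_interior.inter hKclosed.isOpen_compl
    exact interior_maximal hWsub hWopen ⟨hxFI.1, hxK⟩
end

section
/- Let (X,Φ) be a topological flow and let U be a subset of a closed cross-section S such that closure(U) ∩ ∂^Φ(S) = ∅. Then ∂^Φ(U) = ∂_S(U) and Int^Φ(U) = Int_S(U). -/
open Set Topology

variable {X : Type*}

/-- If `U ⊆ S` with `closure U ∩ ∂^Φ(S) = ∅`, then `∂^Φ(U) = ∂_S(U)` and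
`Int^Φ(U) = Int_S(U)`. -/
theorem flowBoundary_eq_relBoundary
    {X : Type*} [MetricSpace X] [CompactSpace X]
    (φ : ℝ → X → X) (hφ : IsFlow X φ)
    (η : ℝ) (S : Set X) (hS : IsClosed S) (hcs : IsCrossSection φ η S)
    (U : Set X) (hUS : U ⊆ S)
    (h : closure U ∩ flowBoundary φ η S = ∅) :
    flowBoundary φ η U = relBoundary S U ∧ flowInterior φ η U = relInterior S U := by
  obtain ⟨hη, hinj⟩ := hcs
  set I : Set ℝ := Set.Icc (-(η/2)) (η/2) with hI
  have hγη : I ⊆ Set.Icc (-η) η := Set.Icc_subset_Icc (by linarith) (by linarith)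
  have h0I : (0 : ℝ) ∈ I := ⟨by linarith, by linarith⟩
  have h0η : (0 : ℝ) ∈ Set.Icc (-η) η := ⟨by linarith, le_of_lt hη⟩
  have hclU : closure U ⊆ S := closure_minimal hUS hS
  -- injectivity consequence: a point of S in flowSet I U must lie in U
  have hinjU : ∀ y ∈ S, y ∈ flowSet φ I U → y ∈ U := by
    rintro y hyS ⟨t, htI, u, huU, hut⟩
    have hpair : ((u, t) : X × ℝ) = (y, 0) := by
      apply hinj (Set.mk_mem_prod (hUS huU) (hγη htI)) (Set.mk_mem_prod hyS h0η)
      simpa [hφ.map_zero] using hut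
    have : u = y := congrArg Prod.fst hpair
    rwa [← this]
  have key : flowInterior φ η U = relInterior S U := by
    apply Set.Subset.antisymm
    · rintro x ⟨hxi, hxU⟩
      have hxS : x ∈ S := hUS hxU
      refine ⟨⟨x, hxS⟩, ?_, rfl⟩
      rw [mem_interior_iff_mem_nhds, mem_nhds_subtype]
      refine ⟨interior (flowSet φ I U), isOpen_interior.mem_nhds hxi, ?_⟩
      rintro ⟨y, hyS⟩ hy
      exact hinjU y hyS (interior_subset hy)
    · rintro x ⟨⟨y, hyS⟩, hyi, rfl⟩
      have hxU' : (⟨y, hyS⟩ : S) ∈ {z : S | (z : X) ∈ U} :=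
        interior_subset (s := {z : S | (z : X) ∈ U}) hyi
      have hxU : y ∈ U := hxU'
      rw [mem_interior_iff_mem_nhds, mem_nhds_subtype] at hyi
      obtain ⟨V, hV, hVsub⟩ := hyi
      refine ⟨?_, hxU⟩
      -- y ∈ interior (flowSet φ I S) via the hypothesis h
      have hyfi : y ∈ interior (flowSet φ I S) := by
        by_contra hc
        have : y ∈ closure U ∩ flowBoundary φ η S :=
          ⟨subset_closure hxU, subset_closure hyS, fun hy => hc hy.1⟩
        rw [h] at this
        exact this
      -- now the compactness argument
      by_contra hni
      rw [mem_interior_iff_mem_nhds] at hni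
      have h1 : ∀ᶠ z in 𝓝 y, z ∈ flowSet φ I S :=
        Filter.mem_of_superset (isOpen_interior.mem_nhds hyfi) interior_subset
      have h2 : ∃ᶠ z in 𝓝 y, z ∉ flowSet φ I U := Filter.not_eventually.mp hni
      have hfreq : ∃ᶠ z in 𝓝 y, z ∈ {z | z ∈ flowSet φ I S ∧ z ∉ flowSet φ I U} :=
        (h2.and_eventually h1).mono fun z hz => ⟨hz.2, hz.1⟩
      have hcl : y ∈ closure {z | z ∈ flowSet φ I S ∧ z ∉ flowSet φ I U} :=
        mem_closure_iff_frequently.mpr hfreq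
      obtain ⟨u, hu, hulim⟩ := mem_closure_iff_seq_limit.mp hcl
      choose t htI s hsS heq using fun n => (hu n).1
      have hK : IsCompact (S ×ˢ I) := (hS.isCompact).prod isCompact_Icc
      have hp : ∀ n, ((s n, t n) : X × ℝ) ∈ S ×ˢ I := fun n =>
        Set.mk_mem_prod (hsS n) (htI n)
      obtain ⟨⟨s₀, t₀⟩, hmem, ψ, hψ, hconv⟩ := hK.tendsto_subseq hp
      have hlim1 : Filter.Tendsto (fun n => φ (t (ψ n)) (s (ψ n))) Filter.atTop
          (𝓝 (φ t₀ s₀)) := (hφ.cont.tendsto (s₀, t₀)).comp hconv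
      have hlim2 : Filter.Tendsto (fun n => φ (t (ψ n)) (s (ψ n))) Filter.atTop (𝓝 y) := by
        have := hulim.comp hψ.tendsto_atTop
        simpa [Function.comp_def, heq] using this
      have hts : φ t₀ s₀ = y := tendsto_nhds_unique hlim1 hlim2
      have hpair : ((s₀, t₀) : X × ℝ) = (y, 0) := by
        apply hinj (Set.mk_mem_prod hmem.1 (hγη hmem.2)) (Set.mk_mem_prod hyS h0η)
        simpa [hφ.map_zero] using hts
      have hs₀ : s₀ = y := congrArg Prod.fst hpair
      have hslim : Filter.Tendsto (fun n => s (ψ n)) Filter.atTop (𝓝 y) := by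
        have := (continuous_fst.tendsto ((s₀, t₀) : X × ℝ)).comp hconv
        rwa [hs₀] at this
      have hev : ∀ᶠ n in Filter.atTop, s (ψ n) ∈ V := hslim.eventually_mem hV
      obtain ⟨n, hn⟩ := hev.exists
      have hsU : s (ψ n) ∈ U := hVsub (show ((⟨s (ψ n), hsS (ψ n)⟩ : S) : X) ∈ V from hn)
      exact (hu (ψ n)).2 ⟨t (ψ n), htI (ψ n), s (ψ n), hsU, heq (ψ n)⟩
  -- closure formula
  have hclos : (fun y : S => (y : X)) '' closure {y : S | (y : X) ∈ U} = closure U := by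
    have himg : (fun y : S => (y : X)) '' {y : S | (y : X) ∈ U} = U := by
      ext z
      constructor
      · rintro ⟨⟨w, hwS⟩, hw, rfl⟩; exact hw
      · intro hz; exact ⟨⟨z, hUS hz⟩, hz, rfl⟩
    ext z
    constructor
    · rintro ⟨w, hw, rfl⟩
      have := closure_subtype.mp hw
      rwa [himg] at this
    · intro hz
      refine ⟨⟨z, hclU hz⟩, ?_, rfl⟩
      rw [closure_subtype, himg]
      exact hz
  constructor
  · have : relBoundary S U = closure U \ relInterior S U := by
      unfold relBoundary relInterior frontier
      rw [Set.image_diff Subtype.val_injective, hclos]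
    rw [this, ← key]
    rfl
  · exact key
end
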